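/- arXiv:0707.4656 — 3 statements merged into one kernel-verified Lean document; each statement's English description precedes it below -/
import Mathlib

section
/- (Converse.) Suppose Q(y|⋆) > 0 for all y ∈ 𝒴. Then no coding strategy achieves an asynchronism exponent strictly greater than max_{x∈𝒳} D(Q(·|x)||Q(·|⋆)): for every α > max_x D(Q(·|x)||Q(·|⋆)) there exists δ > 0 such that for all sufficiently large N, every codebook with M ≥ 2 codewords of length N and every sequential decoder (τ,φ) operating at asynchronism level A ≥ e^{αN} has error probability P(E) ≥ δ. -/
open scoped BigOperators ENNReal

namespace Async

variable {X : Type*} {Y : Type*}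

/-- `μ` is a probability distribution on a finite alphabet. -/
def IsDist {A : Type*} [Fintype A] (μ : A → ℝ) : Prop :=
  (∀ a, 0 ≤ μ a) ∧ ∑ a, μ a = 1

/-- `Q` is a stochastic matrix (discrete memoryless channel). -/
def IsChannel [Fintype X] [Fintype Y] (Q : X → Y → ℝ) : Prop :=
  ∀ x, IsDist (Q x)

open scoped Classical in
/-- Kullback–Leibler divergence `D(μ‖ν)`, valued in `[0,∞]`. -/
noncomputable def klDiv {A : Type*} [Fintype A] (μ ν : A → ℝ) : ℝ≥0∞ :=
  if ∀ a, ν a = 0 → μ a = 0 then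
    ENNReal.ofReal (∑ a, μ a * Real.log (μ a / ν a))
  else ⊤

/-- Real-valued Kullback–Leibler divergence (finite regime). -/
noncomputable def klDivR {A : Type*} [Fintype A] (μ ν : A → ℝ) : ℝ :=
  ∑ a, μ a * Real.log (μ a / ν a)

/-- Left (input) marginal of a joint distribution on `X × Y`. -/
noncomputable def margX [Fintype Y] (V : X × Y → ℝ) : X → ℝ :=
  fun x => ∑ y, V (x, y)

/-- Right (output) marginal of a joint distribution on `X × Y`. -/
noncomputable def margY [Fintype X] (V : X × Y → ℝ) : Y → ℝ :=
  fun y => ∑ x, V (x, y)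

/-- Mutual information `I(V)` of a joint distribution `V` on `X × Y`. -/
noncomputable def mi [Fintype X] [Fintype Y] (V : X × Y → ℝ) : ℝ :=
  ∑ p : X × Y, V p * Real.log (V p / (margX V p.1 * margY V p.2))

/-- The joint distribution `P(x)Q(y|x)` of an input distribution and a channel. -/
noncomputable def joint (P : X → ℝ) (Q : X → Y → ℝ) : X × Y → ℝ :=
  fun p => P p.1 * Q p.1 p.2

/-- Capacity of the synchronized channel: `C(Q) = max_P I(PQ)`. -/
noncomputable def capacity [Fintype X] [Fintype Y] (Q : X → Y → ℝ) : ℝ :=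
  sSup {v : ℝ | ∃ P : X → ℝ, IsDist P ∧ v = mi (joint P Q)}

/-- A sequential decoder: a stopping time `τ` (w.r.t. the natural filtration of the
output sequence, times `1,…,T`) together with an `F_τ`-measurable decision `φ`. -/
structure Decoder (Y : Type*) (T M : ℕ) where
  τ : (Fin T → Y) → ℕ
  φ : (Fin T → Y) → Fin M
  τ_le : ∀ y, τ y ≤ T
  stopping : ∀ y y', (∀ t : Fin T, (t : ℕ) < τ y → y t = y' t) → τ y' = τ y
  meas : ∀ y y', (∀ t : Fin T, (t : ℕ) < τ y → y t = y' t) → φ y' = φ y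

/-- Probability of the output sequence `y` (of length `T`, times `1,…,T`) when the
codeword `c` is transmitted starting at time `l`; noise symbol `star` elsewhere. -/
noncomputable def seqProb (Q : X → Y → ℝ) (star : X) {N T : ℕ}
    (c : Fin N → X) (l : ℕ) (y : Fin T → Y) : ℝ :=
  ∏ t : Fin T,
    Q (if h : l ≤ (t : ℕ) + 1 ∧ (t : ℕ) + 1 < l + N then
        c ⟨(t : ℕ) + 1 - l, by omega⟩ else star) (y t)

/-- Average decoding error probability `P(E)` of a codebook `c` and decoder `dec`
operating at asynchronism level `A`. -/
noncomputable def errProb [Fintype Y] (Q : X → Y → ℝ) (star : X) {N M : ℕ}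
    (c : Fin M → Fin N → X) (A : ℕ) (dec : Decoder Y (A + N - 1) M) : ℝ :=
  (1 / ((A : ℝ) * M)) * ∑ m : Fin M, ∑ l ∈ Finset.Icc 1 A,
    ∑ y : Fin (A + N - 1) → Y, if dec.φ y = m then 0 else seqProb Q star (c m) l y

/-- Expected delay `E(τ-ν)⁺`. -/
noncomputable def expDelay [Fintype Y] (Q : X → Y → ℝ) (star : X) {N M : ℕ}
    (c : Fin M → Fin N → X) (A : ℕ) (dec : Decoder Y (A + N - 1) M) : ℝ :=
  (1 / ((A : ℝ) * M)) * ∑ m : Fin M, ∑ l ∈ Finset.Icc 1 A,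
    ∑ y : Fin (A + N - 1) → Y, seqProb Q star (c m) l y * max ((dec.τ y : ℝ) - l) 0

/-- The asynchronism exponent `α` is achievable at rate `R`: for every `ε > 0` and all
sufficiently large `N` there is a codebook/decoder pair operating at asynchronism level
`A = ⌈e^{(α-ε)N}⌉` with rate at least `R - ε` and error probability at most `ε`. -/
def AchievableAt [Fintype X] [Fintype Y] (Q : X → Y → ℝ) (star : X) (α R : ℝ) : Prop :=
  ∀ ε : ℝ, 0 < ε → ∃ N₀ : ℕ, ∀ N ≥ N₀, ∃ M : ℕ, 2 ≤ M ∧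
    ∃ (c : Fin M → Fin N → X)
      (dec : Decoder Y (⌈Real.exp ((α - ε) * N)⌉₊ + N - 1) M),
      errProb Q star c ⌈Real.exp ((α - ε) * N)⌉₊ dec ≤ ε ∧
      R - ε ≤ Real.log M / expDelay Q star c ⌈Real.exp ((α - ε) * N)⌉₊ dec

section AuxL
variable [Fintype X] [Fintype Y]

lemma sum_prod_eq_prod_sum {T : ℕ} (F : Fin T → Y → ℝ) :
    ∑ y : Fin T → Y, ∏ t, F t (y t) = ∏ t, ∑ b, F t b := by
  classical
  exact (Fintype.prod_sum (fun t b => F t b)).symm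

lemma sum_prod_weighted (Q : X → Y → ℝ) (hQ : IsChannel Q) {T : ℕ} (σ : Fin T → X)
    (W : Finset (Fin T)) (u : Fin T → Y → ℝ) :
    ∑ y : Fin T → Y, (∏ t, Q (σ t) (y t)) * ∏ t ∈ W, u t (y t)
      = ∏ t ∈ W, ∑ b, Q (σ t) b * u t b := by
  classical
  have key : ∀ y : Fin T → Y, (∏ t, Q (σ t) (y t)) * ∏ t ∈ W, u t (y t)
      = ∏ t, (Q (σ t) (y t) * (if t ∈ W then u t (y t) else 1)) := by
    intro y
    rw [Finset.prod_mul_distrib]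
    congr 1
    exact (Fintype.prod_extend_by_one W fun t => u t (y t)).symm
  simp_rw [key]
  rw [sum_prod_eq_prod_sum (F := fun t b => Q (σ t) b * if t ∈ W then u t b else 1)]
  have h2 : ∀ t, (∑ b, Q (σ t) b * (if t ∈ W then u t b else 1))
      = (if t ∈ W then ∑ b, Q (σ t) b * u t b else 1) := by
    intro t; by_cases h : t ∈ W <;> simp [h, (hQ (σ t)).2]
  simp_rw [h2]
  exact Fintype.prod_extend_by_one W _

lemma sum_prob_one (Q : X → Y → ℝ) (hQ : IsChannel Q) {T : ℕ} (σ : Fin T → X) :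
    ∑ y : Fin T → Y, (∏ t, Q (σ t) (y t)) = 1 := by
  rw [sum_prod_eq_prod_sum]
  simp [(hQ _).2]

end AuxL

lemma prod_le_exp_sum_log {ι : Type*} (s : Finset ι) (f : ι → ℝ) (hf : ∀ i ∈ s, 0 ≤ f i) :
    ∏ i ∈ s, f i ≤ Real.exp (∑ i ∈ s, Real.log (f i)) := by
  classical
  by_cases hall : ∀ i ∈ s, 0 < f i
  · rw [Real.exp_sum]
    apply le_of_eq
    exact Finset.prod_congr rfl fun i hi => (Real.exp_log (hall i hi)).symm
  · push_neg at hall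
    obtain ⟨i, hi, hfi⟩ := hall
    have : f i = 0 := le_antisymm hfi (hf i hi)
    rw [Finset.prod_eq_zero hi this]
    exact (Real.exp_pos _).le

lemma quarter_sq_le_exp (x : ℝ) (hx : 0 ≤ x) : x ^ 2 / 4 ≤ Real.exp x := by
  have h := Real.add_one_le_exp (x / 2)
  have h2 : Real.exp (x / 2) * Real.exp (x / 2) = Real.exp x := by
    rw [← Real.exp_add]; ring_nf
  nlinarith [Real.exp_pos (x / 2)]

set_option maxHeartbeats 2000000 in
/-- **Converse.** If `Q(y|⋆) > 0` for every `y`, then no coding strategy achieves an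
asynchronism exponent strictly greater than `max_x D(Q(·|x)‖Q(·|⋆))`: for every
`α` exceeding this quantity there is a `δ > 0` such that for all sufficiently large
blocklengths `N`, every codebook with `M ≥ 2` codewords of length `N` and every
sequential decoder operating at asynchronism level `A ≥ e^{αN}` has error
probability at least `δ`. -/
theorem converse [Fintype X] [Fintype Y] [Nonempty X]
    (Q : X → Y → ℝ) (star : X) (hQ : IsChannel Q)
    (hstar : ∀ y : Y, 0 < Q star y) (α : ℝ)
    (hα : (⨆ x : X, klDiv (Q x) (Q star)) < ENNReal.ofReal α) :
    ∃ δ : ℝ, 0 < δ ∧ ∃ N₀ : ℕ, ∀ N ≥ N₀, ∀ M : ℕ, 2 ≤ M →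
      ∀ c : Fin M → Fin N → X, ∀ A : ℕ, Real.exp (α * N) ≤ (A : ℝ) →
        ∀ dec : Decoder Y (A + N - 1) M, δ ≤ errProb Q star c A dec := by
  classical
  have hQ0 : ∀ x b, 0 ≤ Q x b := fun x => (hQ x).1
  have hQs : ∀ x, ∑ b, Q x b = 1 := fun x => (hQ x).2
  set g : X → Y → ℝ := fun x b => Real.log (Q x b / Q star b) with hgdef
  set D : X → ℝ := fun x => klDivR (Q x) (Q star) with hDdef
  have hDeq : ∀ x, D x = ∑ b, Q x b * g x b := fun x => rfl
  have hDstar : D star = 0 := by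
    rw [hDeq]
    apply Finset.sum_eq_zero
    intro b _
    rw [hgdef]
    simp [div_self (ne_of_gt (hstar b))]
  -- extract D x < α from hα
  have hkl : ∀ x : X, klDiv (Q x) (Q star) = ENNReal.ofReal (D x) := by
    intro x
    rw [klDiv, if_pos]
    · rfl
    · intro a ha
      exact absurd ha (ne_of_gt (hstar a))
  have hsup : ∀ x, klDiv (Q x) (Q star) < ENNReal.ofReal α := fun x =>
    lt_of_le_of_lt (le_iSup (fun x => klDiv (Q x) (Q star)) x) hα
  have hαpos : 0 < α := by
    obtain ⟨x₀⟩ := ‹Nonempty X›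
    have h0 : (0 : ℝ≥0∞) < ENNReal.ofReal α := lt_of_le_of_lt zero_le (hsup x₀)
    exact ENNReal.ofReal_pos.mp h0
  have hDlt : ∀ x, D x < α := by
    intro x
    have hx := hsup x
    rw [hkl x] at hx
    by_contra hcon
    push_neg at hcon
    exact absurd (ENNReal.ofReal_le_ofReal hcon) (not_le.mpr hx)
  have hne : (Finset.univ : Finset X).Nonempty := Finset.univ_nonempty
  set Dm : ℝ := Finset.univ.sup' hne D with hDmdef
  have hDmlt : Dm < α := (Finset.sup'_lt_iff hne).2 fun x _ => hDlt x
  have hDm0 : 0 ≤ Dm := hDstar ▸ Finset.le_sup' D (Finset.mem_univ star)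
  have hDle : ∀ x, D x ≤ Dm := fun x => Finset.le_sup' D (Finset.mem_univ x)
  set β : ℝ := (Dm + α) / 2 with hβdef
  set κ : ℝ := (α - Dm) / 2 with hκdef
  have hκpos : 0 < κ := by rw [hκdef]; linarith
  have hβ0 : 0 ≤ β := by rw [hβdef]; linarith
  have hβκ : β = Dm + κ := by rw [hβdef, hκdef]; ring
  have hακ : α = β + κ := by rw [hβdef, hκdef]; ring
  set V : ℝ := ∑ x, ∑ b, Q x b * (g x b - D x) ^ 2 with hVdef
  have hVx : ∀ x, ∑ b, Q x b * (g x b - D x) ^ 2 ≤ V := by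
    intro x
    rw [hVdef]
    apply Finset.single_le_sum (f := fun x => ∑ b, Q x b * (g x b - D x) ^ 2)
      (fun i _ => Finset.sum_nonneg fun b _ => mul_nonneg (hQ0 i b) (sq_nonneg _))
      (Finset.mem_univ x)
  have hV0 : 0 ≤ V :=
    Finset.sum_nonneg fun i _ => Finset.sum_nonneg fun b _ => mul_nonneg (hQ0 i b) (sq_nonneg _)
  set C : ℝ := V / κ ^ 2 with hCdef
  have hC0 : 0 ≤ C := div_nonneg hV0 (sq_nonneg _)
  refine ⟨1/4, by norm_num, ⌈100 * C⌉₊ + ⌈400 / κ ^ 2⌉₊ + 1, ?_⟩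
  intro N hN M hM c A hA
  -- numeric facts about N, A, M
  have hN1 : 1 ≤ N := le_trans (by omega) hN
  have hNr : (1:ℝ) ≤ (N:ℝ) := by exact_mod_cast hN1
  have hNpos : (0:ℝ) < N := lt_of_lt_of_le one_pos hNr
  have hNC : C / N ≤ 1 / 100 := by
    have h1 : 100 * C ≤ (N:ℝ) := by
      calc 100 * C ≤ (⌈100 * C⌉₊ : ℝ) := Nat.le_ceil _
        _ ≤ (N:ℝ) := by exact_mod_cast le_trans (by omega) hN
    rw [div_le_div_iff₀ hNpos (by norm_num)]
    linarith
  have hNκ : 400 / κ ^ 2 ≤ (N:ℝ) := by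
    calc 400 / κ ^ 2 ≤ (⌈400 / κ ^ 2⌉₊ : ℝ) := Nat.le_ceil _
      _ ≤ (N:ℝ) := by exact_mod_cast le_trans (by omega) hN
  have hApos : (0:ℝ) < A := lt_of_lt_of_le (Real.exp_pos _) hA
  have hMpos : (0:ℝ) < M := by
    have : (2:ℝ) ≤ M := by exact_mod_cast hM
    linarith
  have hκN : 400 ≤ κ ^ 2 * N := by
    rw [div_le_iff₀ (by positivity)] at hNκ
    linarith
  -- the exponential decay bound
  have hdecay : 2 * (N:ℝ) * Real.exp (β * N - α * N) ≤ 1 / 50 := by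
    have he1 : (κ * N) ^ 2 / 4 ≤ Real.exp (κ * N) := quarter_sq_le_exp _ (by positivity)
    have hF : (0:ℝ) < Real.exp (κ * N) := Real.exp_pos _
    have h100 : 100 * (N:ℝ) ≤ Real.exp (κ * N) := by nlinarith
    have he2 : Real.exp (β * N - α * N) * Real.exp (κ * N) = 1 := by
      rw [← Real.exp_add]
      have h0 : β * (N:ℝ) - α * N + κ * N = 0 := by rw [hακ]; ring
      rw [h0, Real.exp_zero]
    have hE : Real.exp (β * N - α * N) = 1 / Real.exp (κ * N) :=
      eq_one_div_of_mul_eq_one_left he2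
    rw [hE, mul_one_div, div_le_div_iff₀ hF (by norm_num)]
    nlinarith
  have hexpA : 2 * (N:ℝ) * Real.exp (β * N) ≤ (A:ℝ) / 50 := by
    have : Real.exp (β * N) = Real.exp (β * N - α * N) * Real.exp (α * N) := by
      rw [← Real.exp_add]; ring_nf
    rw [this]
    calc 2 * (N:ℝ) * (Real.exp (β * N - α * N) * Real.exp (α * N))
        = (2 * N * Real.exp (β * N - α * N)) * Real.exp (α * N) := by ring
      _ ≤ (1/50) * (A:ℝ) := by
          apply mul_le_mul hdecay hA (Real.exp_pos _).le (by norm_num)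
      _ = (A:ℝ) / 50 := by ring
  -- the input map
  set T := A + N - 1 with hT
  intro dec
  set σ : Fin M → ℕ → Fin T → X := fun m l t =>
    if h : l ≤ (t:ℕ) + 1 ∧ (t:ℕ) + 1 < l + N then c m ⟨(t:ℕ) + 1 - l, by omega⟩ else star
    with hσdef
  have hseq : ∀ (m : Fin M) (l : ℕ) (y : Fin T → Y),
      seqProb Q star (c m) l y = ∏ t, Q (σ m l t) (y t) := fun _ _ _ => rfl
  have hσcases : ∀ m l (t : Fin T), ¬(l ≤ (t:ℕ) + 1 ∧ (t:ℕ) + 1 < l + N) → σ m l t = star := by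
    intro m l t h
    rw [hσdef]
    exact dif_neg h
  -- window sum bound
  have hwinsum : ∀ (m : Fin M) (l : ℕ) (f : X → ℝ) (B : ℝ), f star = 0 → (∀ x, f x ≤ B) →
      0 ≤ B → ∑ t, f (σ m l t) ≤ N * B := by
    intro m l f B hf0 hfB hB
    classical
    set W := Finset.univ.filter (fun t : Fin T => l ≤ (t:ℕ) + 1 ∧ (t:ℕ) + 1 < l + N) with hW
    have hcard : W.card ≤ N := by
      have : W.card ≤ (Finset.range N).card := by
        refine Finset.card_le_card_of_injOn (fun t => (t:ℕ) + 1 - l) ?_ ?_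
        · intro t ht
          simp only [hW, Finset.coe_filter, Finset.mem_coe, Finset.mem_filter, Finset.mem_univ, true_and, Set.mem_setOf_eq] at ht
          simp only [Finset.mem_coe, Finset.coe_range, Set.mem_Iio, Finset.mem_range]
          omega
        · intro t ht t' ht' hh
          simp only [hW, Finset.coe_filter, Finset.mem_univ, true_and,
            Set.mem_setOf_eq] at ht ht'
          simp only [] at hh
          have : (t:ℕ) = (t':ℕ) := by omega
          exact Fin.ext this
      simpa using this
    rw [← Finset.sum_filter_add_sum_filter_not Finset.univ
      (fun t : Fin T => l ≤ (t:ℕ) + 1 ∧ (t:ℕ) + 1 < l + N)]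
    have h2 : ∑ t ∈ Finset.univ.filter
        (fun t : Fin T => ¬(l ≤ (t:ℕ) + 1 ∧ (t:ℕ) + 1 < l + N)), f (σ m l t) = 0 := by
      apply Finset.sum_eq_zero
      intro t ht
      rw [Finset.mem_filter] at ht
      rw [hσcases m l t ht.2, hf0]
    rw [h2, add_zero]
    calc ∑ t ∈ W, f (σ m l t) ≤ W.card • B := Finset.sum_le_card_nsmul _ _ _ fun t _ => hfB _
      _ = (W.card : ℝ) * B := nsmul_eq_mul _ _
      _ ≤ N * B := by
          apply mul_le_mul_of_nonneg_right _ hB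
          exact_mod_cast hcard
  -- measures and ratios
  set w : (Fin T → Y) → ℝ := fun y => ∏ t, Q star (y t) with hwdef
  have hw0 : ∀ y, 0 ≤ w y := fun y => Finset.prod_nonneg fun t _ => hQ0 _ _
  set ρ : Fin M → ℕ → Fin T → Y → ℝ := fun m l t b => Q (σ m l t) b / Q star b with hρdef
  have hρ0 : ∀ m l t b, 0 ≤ ρ m l t b := fun m l t b => div_nonneg (hQ0 _ _) (hQ0 _ _)
  set r : Fin M → ℕ → (Fin T → Y) → ℝ := fun m l y => ∏ t, ρ m l t (y t) with hrdef
  set G : Fin M → ℕ → (Fin T → Y) → ℝ := fun m l y => ∑ t, Real.log (ρ m l t (y t)) with hGdef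
  set rt : Fin M → ℕ → (Fin T → Y) → ℝ :=
    fun m l y => if G m l y ≤ β * N then r m l y else 0 with hrtdef
  have hr0 : ∀ m l y, 0 ≤ r m l y := fun m l y => Finset.prod_nonneg fun t _ => hρ0 m l t _
  have hrt0 : ∀ m l y, 0 ≤ rt m l y := by
    intro m l y
    rw [hrtdef]
    dsimp only
    split
    · exact hr0 m l y
    · exact le_refl 0
  have hQstar_ne : ∀ b, Q star b ≠ 0 := fun b => ne_of_gt (hstar b)
  have hwr : ∀ m l y, w y * r m l y = ∏ t, Q (σ m l t) (y t) := by
    intro m l y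
    rw [hwdef, hrdef]
    dsimp only
    rw [← Finset.prod_mul_distrib]
    apply Finset.prod_congr rfl
    intro t _
    rw [hρdef]
    dsimp only
    rw [mul_comm, div_mul_cancel₀ _ (hQstar_ne (y t))]
  have hPsum : ∀ m l, ∑ y : Fin T → Y, (∏ t, Q (σ m l t) (y t)) = 1 :=
    fun m l => sum_prob_one Q hQ (σ m l)
  have hEr : ∀ m l, ∑ y : Fin T → Y, w y * r m l y = 1 := by
    intro m l
    rw [Finset.sum_congr rfl fun y _ => hwr m l y]
    exact hPsum m l
  have hrtr : ∀ m l y, rt m l y ≤ r m l y := by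
    intro m l y
    rw [hrtdef]
    dsimp only
    split
    · exact le_refl _
    · exact hr0 m l y
  have hErt : ∀ m l, ∑ y : Fin T → Y, w y * rt m l y ≤ 1 := by
    intro m l
    calc ∑ y : Fin T → Y, w y * rt m l y ≤ ∑ y : Fin T → Y, w y * r m l y :=
          Finset.sum_le_sum fun y _ => mul_le_mul_of_nonneg_left (hrtr m l y) (hw0 y)
      _ = 1 := hEr m l
  have hrtB : ∀ m l y, rt m l y ≤ Real.exp (β * N) := by
    intro m l y
    rw [hrtdef]
    dsimp only
    split
    · next hle =>
        calc r m l y ≤ Real.exp (G m l y) := by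
              rw [hrdef, hGdef]
              exact prod_le_exp_sum_log _ _ fun t _ => hρ0 m l t (y t)
          _ ≤ Real.exp (β * N) := Real.exp_le_exp.mpr hle
    · exact (Real.exp_pos _).le
  -- log-ratio identity
  have hglog : ∀ m l (t : Fin T) (b : Y), Real.log (ρ m l t b) = g (σ m l t) b := by
    intro m l t b; rw [hρdef, hgdef]
  -- Chebyshev bound
  have hCheb : ∀ m l, ∑ y : Fin T → Y,
      (if β * N < G m l y then (∏ t, Q (σ m l t) (y t)) else 0) ≤ C / N := by
    intro m l
    set P : (Fin T → Y) → ℝ := fun y => ∏ t, Q (σ m l t) (y t) with hPdef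
    have hP0 : ∀ y, 0 ≤ P y := fun y => Finset.prod_nonneg fun t _ => hQ0 _ _
    set h : Fin T → Y → ℝ := fun t b => g (σ m l t) b - D (σ m l t) with hhdef
    set μ : ℝ := ∑ t, D (σ m l t) with hμdef
    have hμ : μ ≤ N * Dm := hwinsum m l D Dm hDstar hDle hDm0
    have hGμ : ∀ y, G m l y - μ = ∑ t, h t (y t) := by
      intro y
      rw [hGdef, hμdef, hhdef]
      dsimp only
      rw [← Finset.sum_sub_distrib]
    have hmean : ∀ t : Fin T, ∑ b, Q (σ m l t) b * h t b = 0 := by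
      intro t
      rw [hhdef]
      dsimp only
      have : ∀ b, Q (σ m l t) b * (g (σ m l t) b - D (σ m l t))
          = Q (σ m l t) b * g (σ m l t) b - Q (σ m l t) b * D (σ m l t) := fun b => by ring
      rw [Finset.sum_congr rfl fun b _ => this b, Finset.sum_sub_distrib,
        ← Finset.sum_mul, hQs, one_mul, ← hDeq, sub_self]
    -- variance bound
    have hvar : ∑ y : Fin T → Y, P y * (G m l y - μ) ^ 2 ≤ N * V := by
      have hexpand : ∀ y, P y * (G m l y - μ) ^ 2
          = ∑ s : Fin T, ∑ s' : Fin T, P y * (h s (y s) * h s' (y s')) := by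
        intro y
        rw [hGμ, sq, Finset.sum_mul_sum]
        rw [Finset.mul_sum]
        exact Finset.sum_congr rfl fun s _ => by rw [Finset.mul_sum]
      rw [Finset.sum_congr rfl fun y _ => hexpand y]
      rw [Finset.sum_comm]
      have hswap2 : ∀ s : Fin T, ∑ y : Fin T → Y, ∑ s' : Fin T, P y * (h s (y s) * h s' (y s'))
          = ∑ s' : Fin T, ∑ y : Fin T → Y, P y * (h s (y s) * h s' (y s')) :=
        fun s => Finset.sum_comm
      rw [Finset.sum_congr rfl fun s _ => hswap2 s]
      have hterm : ∀ s s' : Fin T, ∑ y : Fin T → Y, P y * (h s (y s) * h s' (y s'))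
          = if s = s' then ∑ b, Q (σ m l s) b * (h s b) ^ 2 else 0 := by
        intro s s'
        by_cases hss : s = s'
        · subst hss
          rw [if_pos rfl]
          have := sum_prod_weighted Q hQ (σ m l) {s} (fun t b => (h t b) ^ 2)
          rw [Finset.prod_singleton] at this
          rw [← this]
          apply Finset.sum_congr rfl
          intro y _
          rw [Finset.prod_singleton, hPdef]
          ring
        · rw [if_neg hss]
          have := sum_prod_weighted Q hQ (σ m l) {s, s'} (fun t b => h t b)
          rw [Finset.prod_pair hss] at this
          calc ∑ y : Fin T → Y, P y * (h s (y s) * h s' (y s'))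
              = ∑ y : Fin T → Y, (∏ t, Q (σ m l t) (y t)) * ∏ t ∈ ({s, s'} : Finset (Fin T)), h t (y t) := by
                apply Finset.sum_congr rfl
                intro y _
                rw [Finset.prod_pair hss, hPdef]
            _ = (∑ b, Q (σ m l s) b * h s b) * (∑ b, Q (σ m l s') b * h s' b) := this
            _ = 0 := by rw [hmean s, zero_mul]
      rw [Finset.sum_congr rfl fun s _ => Finset.sum_congr rfl fun s' _ => hterm s s']
      have hdiag : ∀ s : Fin T,
          (∑ s' : Fin T, if s = s' then ∑ b, Q (σ m l s) b * (h s b) ^ 2 else 0)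
          = ∑ b, Q (σ m l s) b * (h s b) ^ 2 := by
        intro s
        rw [Finset.sum_ite_eq]
        simp
      rw [Finset.sum_congr rfl fun s _ => hdiag s]
      -- now ∑ s, f (σ m l s) ≤ N * V
      have hfs : ∀ s : Fin T, (∑ b, Q (σ m l s) b * (h s b) ^ 2)
          = (fun x => ∑ b, Q x b * (g x b - D x) ^ 2) (σ m l s) := by
        intro s
        rw [hhdef]
      rw [Finset.sum_congr rfl fun s _ => hfs s]
      apply hwinsum m l _ V _ hVx hV0
      · apply Finset.sum_eq_zero
        intro b _
        rw [hgdef, hDstar]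
        simp [div_self (hQstar_ne b)]
    -- pointwise chebyshev
    have hκN' : (0:ℝ) < κ * N := by positivity
    have hsq : (0:ℝ) < (κ * N) ^ 2 := by positivity
    have hb : β * (N:ℝ) = Dm * N + κ * N := by rw [hβκ]; ring
    have hb' : (N:ℝ) * Dm = Dm * N := mul_comm _ _
    have hpt : ∀ y, (if β * N < G m l y then P y else 0)
        ≤ P y * (G m l y - μ) ^ 2 / (κ * N) ^ 2 := by
      intro y
      split
      · next hgt =>
          have h1 : κ * N ≤ G m l y - μ := by linarith
          have h2 : (κ * N) ^ 2 ≤ (G m l y - μ) ^ 2 := pow_le_pow_left₀ hκN'.le h1 2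
          rw [le_div_iff₀ hsq]
          exact mul_le_mul_of_nonneg_left h2 (hP0 y)
      · exact div_nonneg (mul_nonneg (hP0 _) (sq_nonneg _)) hsq.le
    calc ∑ y : Fin T → Y, (if β * N < G m l y then P y else 0)
        ≤ ∑ y : Fin T → Y, P y * (G m l y - μ) ^ 2 / (κ * N) ^ 2 :=
          Finset.sum_le_sum fun y _ => hpt y
      _ = (∑ y : Fin T → Y, P y * (G m l y - μ) ^ 2) / (κ * N) ^ 2 := by
          rw [Finset.sum_div]
      _ ≤ (N * V) / (κ * N) ^ 2 := div_le_div_of_nonneg_right hvar hsq.le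
      _ = C / N := by
          have hκ2 : κ ^ 2 * (N:ℝ) ^ 2 ≠ 0 :=
            (mul_pos (pow_pos hκpos 2) (pow_pos hNpos 2)).ne'
          have hκ3 : κ ^ 2 * (N:ℝ) ≠ 0 := (mul_pos (pow_pos hκpos 2) hNpos).ne'
          rw [hCdef, div_div, mul_pow, div_eq_div_iff hκ2 hκ3]
          ring
  -- disjoint windows: product of ratios integrates to 1 under noise
  have hdisj : ∀ (m : Fin M) (l l' : ℕ), (l + N ≤ l' ∨ l' + N ≤ l) →
      ∑ y : Fin T → Y, w y * (r m l y * r m l' y) = 1 := by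
    intro m l l' hd
    have key := sum_prod_weighted Q hQ (fun _ : Fin T => star) Finset.univ
      (fun t b => ρ m l t b * ρ m l' t b)
    have hL : ∀ y : Fin T → Y, w y * (r m l y * r m l' y)
        = (∏ t, Q star (y t)) * ∏ t, (ρ m l t (y t) * ρ m l' t (y t)) := by
      intro y
      rw [hwdef, hrdef]
      dsimp only
      rw [Finset.prod_mul_distrib]
    rw [Finset.sum_congr rfl fun y _ => hL y, key]
    apply Finset.prod_eq_one
    intro t _
    have hone : ∀ (m' : Fin M) (l'' : ℕ), σ m' l'' t = star → ∀ b, ρ m' l'' t b = 1 := by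
      intro m' l'' hs b
      rw [hρdef]
      dsimp only
      rw [hs]
      exact div_self (hQstar_ne b)
    have honeQ : ∀ (m' : Fin M) (l'' : ℕ) (b : Y), Q star b * ρ m' l'' t b = Q (σ m' l'' t) b := by
      intro m' l'' b
      rw [hρdef]
      dsimp only
      rw [mul_comm, div_mul_cancel₀ _ (hQstar_ne b)]
    by_cases hcase : l ≤ (t:ℕ) + 1 ∧ (t:ℕ) + 1 < l + N
    · have hs' : σ m l' t = star := hσcases m l' t (by omega)
      have : ∀ b, Q star b * (ρ m l t b * ρ m l' t b) = Q (σ m l t) b := by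
        intro b
        rw [hone m l' hs' b, mul_one, honeQ]
      rw [Finset.sum_congr rfl fun b _ => this b]
      exact hQs _
    · have hs : σ m l t = star := hσcases m l t hcase
      have : ∀ b, Q star b * (ρ m l t b * ρ m l' t b) = Q (σ m l' t) b := by
        intro b
        rw [hone m l hs b, one_mul, honeQ]
      rw [Finset.sum_congr rfl fun b _ => this b]
      exact hQs _
  -- second moment of truncated ratios: generic bounds
  have hpair_disj : ∀ (m : Fin M) (l l' : ℕ), (l + N ≤ l' ∨ l' + N ≤ l) →
      ∑ y : Fin T → Y, w y * (rt m l y * rt m l' y) ≤ 1 := by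
    intro m l l' hd
    calc ∑ y : Fin T → Y, w y * (rt m l y * rt m l' y)
        ≤ ∑ y : Fin T → Y, w y * (r m l y * r m l' y) := by
          apply Finset.sum_le_sum
          intro y _
          apply mul_le_mul_of_nonneg_left _ (hw0 y)
          exact mul_le_mul (hrtr m l y) (hrtr m l' y) (hrt0 m l' y) (hr0 m l y)
      _ = 1 := hdisj m l l' hd
  have hpair_any : ∀ (m : Fin M) (l l' : ℕ),
      ∑ y : Fin T → Y, w y * (rt m l y * rt m l' y) ≤ Real.exp (β * N) := by
    intro m l l'
    calc ∑ y : Fin T → Y, w y * (rt m l y * rt m l' y)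
        ≤ ∑ y : Fin T → Y, Real.exp (β * N) * (w y * rt m l' y) := by
          apply Finset.sum_le_sum
          intro y _
          have h1 : w y * (rt m l y * rt m l' y) = rt m l y * (w y * rt m l' y) := by ring
          rw [h1]
          apply mul_le_mul_of_nonneg_right (hrtB m l y)
          exact mul_nonneg (hw0 y) (hrt0 m l' y)
      _ = Real.exp (β * N) * ∑ y : Fin T → Y, w y * rt m l' y := by rw [Finset.mul_sum]
      _ ≤ Real.exp (β * N) * 1 := by
          exact mul_le_mul_of_nonneg_left (hErt m l') (Real.exp_pos _).le
      _ = Real.exp (β * N) := mul_one _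
  -- total sum of truncated ratios
  set S : Fin M → (Fin T → Y) → ℝ := fun m y => ∑ l ∈ Finset.Icc 1 A, rt m l y with hSdef
  have hS0 : ∀ m y, 0 ≤ S m y := fun m y => Finset.sum_nonneg fun l _ => hrt0 m l y
  have hcardIcc : (Finset.Icc 1 A).card = A := by rw [Nat.card_Icc]; omega
  have hS2 : ∀ m, ∑ y : Fin T → Y, w y * S m y ^ 2
      ≤ (A:ℝ) * ((A:ℝ) + 2 * N * Real.exp (β * N)) := by
    intro m
    have hexpand : ∀ y : Fin T → Y, w y * S m y ^ 2
        = ∑ l ∈ Finset.Icc 1 A, ∑ l' ∈ Finset.Icc 1 A, w y * (rt m l y * rt m l' y) := by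
      intro y
      rw [hSdef]
      dsimp only
      rw [sq, Finset.sum_mul_sum, Finset.mul_sum]
      exact Finset.sum_congr rfl fun l _ => by rw [Finset.mul_sum]
    rw [Finset.sum_congr rfl fun y _ => hexpand y]
    rw [Finset.sum_comm]
    have hswap2 : ∀ l, ∑ y : Fin T → Y, ∑ l' ∈ Finset.Icc 1 A, w y * (rt m l y * rt m l' y)
        = ∑ l' ∈ Finset.Icc 1 A, ∑ y : Fin T → Y, w y * (rt m l y * rt m l' y) :=
      fun l => Finset.sum_comm
    rw [Finset.sum_congr rfl fun l _ => hswap2 l]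
    have hbound : ∀ l ∈ Finset.Icc 1 A, ∑ l' ∈ Finset.Icc 1 A,
        (∑ y : Fin T → Y, w y * (rt m l y * rt m l' y))
        ≤ (A:ℝ) + 2 * N * Real.exp (β * N) := by
      intro l _
      have hterm : ∀ l' ∈ Finset.Icc 1 A, (∑ y : Fin T → Y, w y * (rt m l y * rt m l' y))
          ≤ 1 + (if ¬(l + N ≤ l' ∨ l' + N ≤ l) then Real.exp (β * N) else 0) := by
        intro l' _
        by_cases hd : l + N ≤ l' ∨ l' + N ≤ l
        · rw [if_neg (not_not_intro hd)]
          have := hpair_disj m l l' hd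
          linarith
        · rw [if_pos hd]
          have := hpair_any m l l'
          linarith
      calc ∑ l' ∈ Finset.Icc 1 A, (∑ y : Fin T → Y, w y * (rt m l y * rt m l' y))
          ≤ ∑ l' ∈ Finset.Icc 1 A,
            (1 + (if ¬(l + N ≤ l' ∨ l' + N ≤ l) then Real.exp (β * N) else 0)) :=
            Finset.sum_le_sum hterm
        _ = (A:ℝ) + ∑ l' ∈ Finset.Icc 1 A,
            (if ¬(l + N ≤ l' ∨ l' + N ≤ l) then Real.exp (β * N) else 0) := by
            rw [Finset.sum_add_distrib, Finset.sum_const, hcardIcc, nsmul_eq_mul, mul_one]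
        _ ≤ (A:ℝ) + 2 * N * Real.exp (β * N) := by
            have hfil : ∑ l' ∈ Finset.Icc 1 A,
                (if ¬(l + N ≤ l' ∨ l' + N ≤ l) then Real.exp (β * N) else 0)
                = ∑ l' ∈ (Finset.Icc 1 A).filter (fun l' => ¬(l + N ≤ l' ∨ l' + N ≤ l)),
                  Real.exp (β * N) := (Finset.sum_filter _ _).symm
            have hsub : (Finset.Icc 1 A).filter (fun l' => ¬(l + N ≤ l' ∨ l' + N ≤ l))
                ⊆ Finset.Icc (l + 1 - N) (l + N - 1) := by
              intro l' hl'
              rw [Finset.mem_filter, Finset.mem_Icc] at hl'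
              rw [Finset.mem_Icc]
              omega
            have hcard : ((Finset.Icc 1 A).filter
                (fun l' => ¬(l + N ≤ l' ∨ l' + N ≤ l))).card ≤ 2 * N := by
              calc ((Finset.Icc 1 A).filter (fun l' => ¬(l + N ≤ l' ∨ l' + N ≤ l))).card
                  ≤ (Finset.Icc (l + 1 - N) (l + N - 1)).card := Finset.card_le_card hsub
                _ ≤ 2 * N := by rw [Nat.card_Icc]; omega
            rw [hfil, Finset.sum_const, nsmul_eq_mul]
            have : (((Finset.Icc 1 A).filter
                (fun l' => ¬(l + N ≤ l' ∨ l' + N ≤ l))).card : ℝ) ≤ 2 * N := by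
              exact_mod_cast hcard
            nlinarith [Real.exp_pos (β * (N:ℝ))]
    calc ∑ l ∈ Finset.Icc 1 A, ∑ l' ∈ Finset.Icc 1 A,
          (∑ y : Fin T → Y, w y * (rt m l y * rt m l' y))
        ≤ ∑ l ∈ Finset.Icc 1 A, ((A:ℝ) + 2 * N * Real.exp (β * N)) :=
          Finset.sum_le_sum hbound
      _ = (A:ℝ) * ((A:ℝ) + 2 * N * Real.exp (β * N)) := by
          rw [Finset.sum_const, hcardIcc, nsmul_eq_mul]
  -- decision indicator and output-only probabilities
  set ind : Fin M → (Fin T → Y) → ℝ := fun m y => if dec.φ y = m then 1 else 0 with hinddef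
  have hind0 : ∀ m y, 0 ≤ ind m y := by
    intro m y; rw [hinddef]; dsimp only; split <;> norm_num
  have hind_sq : ∀ m y, ind m y ^ 2 = ind m y := by
    intro m y; rw [hinddef]; dsimp only; split <;> norm_num
  set p : Fin M → ℝ := fun m => ∑ y : Fin T → Y, w y * ind m y with hpdef
  have hp0 : ∀ m, 0 ≤ p m := fun m =>
    Finset.sum_nonneg fun y _ => mul_nonneg (hw0 y) (hind0 m y)
  have hwsum : ∑ y : Fin T → Y, w y = 1 := sum_prob_one Q hQ (fun _ => star)
  have hpsum : ∑ m, p m = 1 := by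
    rw [hpdef]
    dsimp only
    rw [Finset.sum_comm]
    have hy : ∀ y : Fin T → Y, ∑ m, w y * ind m y = w y := by
      intro y
      rw [← Finset.mul_sum]
      have : ∑ m, ind m y = 1 := by
        rw [hinddef]
        dsimp only
        rw [Finset.sum_ite_eq]
        simp
      rw [this, mul_one]
    rw [Finset.sum_congr rfl fun y _ => hy y]
    exact hwsum
  -- Cauchy-Schwarz
  set B : ℝ := (A:ℝ) * ((A:ℝ) + 2 * N * Real.exp (β * N)) with hBdef
  have hB0 : 0 ≤ B := by
    rw [hBdef]
    have := Real.exp_pos (β * (N:ℝ))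
    positivity
  have hCS : ∀ m, ∑ y : Fin T → Y, w y * S m y * ind m y
      ≤ Real.sqrt B * Real.sqrt (p m) := by
    intro m
    have key := Finset.sum_mul_sq_le_sq_mul_sq Finset.univ
      (fun y : Fin T → Y => Real.sqrt (w y) * S m y) (fun y => Real.sqrt (w y) * ind m y)
    have h1 : ∀ y : Fin T → Y, (Real.sqrt (w y) * S m y) * (Real.sqrt (w y) * ind m y)
        = w y * S m y * ind m y := by
      intro y
      have hq : (Real.sqrt (w y) * S m y) * (Real.sqrt (w y) * ind m y)
          = (Real.sqrt (w y) * Real.sqrt (w y)) * (S m y * ind m y) := by ring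
      rw [hq, Real.mul_self_sqrt (hw0 y)]
      ring
    have h2 : ∀ y : Fin T → Y, (Real.sqrt (w y) * S m y) ^ 2 = w y * S m y ^ 2 := by
      intro y
      rw [mul_pow, Real.sq_sqrt (hw0 y)]
    have h3 : ∀ y : Fin T → Y, (Real.sqrt (w y) * ind m y) ^ 2 = w y * ind m y := by
      intro y
      rw [mul_pow, Real.sq_sqrt (hw0 y), hind_sq]
    rw [Finset.sum_congr rfl fun y _ => h1 y, Finset.sum_congr rfl fun y _ => h2 y,
      Finset.sum_congr rfl fun y _ => h3 y] at key
    have ha0 : 0 ≤ ∑ y : Fin T → Y, w y * S m y * ind m y :=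
      Finset.sum_nonneg fun y _ => mul_nonneg (mul_nonneg (hw0 y) (hS0 m y)) (hind0 m y)
    have hb2 : (∑ y : Fin T → Y, w y * S m y ^ 2) * p m ≤ B * p m :=
      mul_le_mul_of_nonneg_right (hS2 m) (hp0 m)
    calc ∑ y : Fin T → Y, w y * S m y * ind m y
        = Real.sqrt ((∑ y : Fin T → Y, w y * S m y * ind m y) ^ 2) := (Real.sqrt_sq ha0).symm
      _ ≤ Real.sqrt (B * p m) := Real.sqrt_le_sqrt (le_trans key hb2)
      _ = Real.sqrt B * Real.sqrt (p m) := Real.sqrt_mul hB0 _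
  have hsqp : ∑ m, Real.sqrt (p m) ≤ Real.sqrt M := by
    have key := Finset.sum_mul_sq_le_sq_mul_sq Finset.univ
      (fun m => Real.sqrt (p m)) (fun _ => (1:ℝ))
    simp only [mul_one, one_pow] at key
    have h1 : ∀ m ∈ Finset.univ, Real.sqrt (p m) ^ 2 = p m := fun m _ => Real.sq_sqrt (hp0 m)
    rw [Finset.sum_congr rfl h1, hpsum, Finset.sum_const, Finset.card_univ,
      Fintype.card_fin, nsmul_eq_mul, mul_one, one_mul] at key
    have ha0 : 0 ≤ ∑ m, Real.sqrt (p m) :=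
      Finset.sum_nonneg fun m _ => Real.sqrt_nonneg _
    calc ∑ m, Real.sqrt (p m)
        = Real.sqrt ((∑ m, Real.sqrt (p m)) ^ 2) := (Real.sqrt_sq ha0).symm
      _ ≤ Real.sqrt M := Real.sqrt_le_sqrt key
  -- pointwise decomposition of correct-decoding probability
  have hptw : ∀ (m : Fin M) (l : ℕ) (y : Fin T → Y),
      (if dec.φ y = m then (∏ t, Q (σ m l t) (y t)) else 0)
      ≤ (if β * N < G m l y then (∏ t, Q (σ m l t) (y t)) else 0)
        + w y * rt m l y * ind m y := by
    intro m l y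
    by_cases hG : G m l y ≤ β * N
    · rw [if_neg (not_lt.mpr hG)]
      have hrteq : rt m l y = r m l y := by rw [hrtdef]; dsimp only; rw [if_pos hG]
      have heq : w y * rt m l y * ind m y
          = (if dec.φ y = m then (∏ t, Q (σ m l t) (y t)) else 0) := by
        rw [hrteq, hinddef]
        dsimp only
        split
        · rw [mul_one, hwr]
        · rw [mul_zero]
      rw [heq, zero_add]
    · rw [if_pos (not_le.mp hG)]
      have h0 : 0 ≤ w y * rt m l y * ind m y :=
        mul_nonneg (mul_nonneg (hw0 y) (hrt0 m l y)) (hind0 m y)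
      have hle : (if dec.φ y = m then (∏ t, Q (σ m l t) (y t)) else 0)
          ≤ ∏ t, Q (σ m l t) (y t) := by
        split
        · exact le_refl _
        · exact Finset.prod_nonneg fun t _ => hQ0 _ _
      linarith
  have hcorr : ∀ (m : Fin M) (l : ℕ),
      ∑ y : Fin T → Y, (if dec.φ y = m then (∏ t, Q (σ m l t) (y t)) else 0)
      ≤ C / N + ∑ y : Fin T → Y, w y * rt m l y * ind m y := by
    intro m l
    calc ∑ y : Fin T → Y, (if dec.φ y = m then (∏ t, Q (σ m l t) (y t)) else 0)
        ≤ ∑ y : Fin T → Y, ((if β * N < G m l y then (∏ t, Q (σ m l t) (y t)) else 0)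
            + w y * rt m l y * ind m y) := Finset.sum_le_sum fun y _ => hptw m l y
      _ = (∑ y : Fin T → Y, (if β * N < G m l y then (∏ t, Q (σ m l t) (y t)) else 0))
            + ∑ y : Fin T → Y, w y * rt m l y * ind m y := Finset.sum_add_distrib
      _ ≤ C / N + ∑ y : Fin T → Y, w y * rt m l y * ind m y :=
          add_le_add_left (hCheb m l) _
  have hswapS : ∀ m, ∑ l ∈ Finset.Icc 1 A, ∑ y : Fin T → Y, w y * rt m l y * ind m y
      = ∑ y : Fin T → Y, w y * S m y * ind m y := by
    intro m
    rw [Finset.sum_comm]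
    apply Finset.sum_congr rfl
    intro y _
    have h1 : ∀ l, w y * rt m l y * ind m y = rt m l y * (w y * ind m y) := fun l => by ring
    rw [Finset.sum_congr rfl fun l _ => h1 l, ← Finset.sum_mul]
    rw [hSdef]
    dsimp only
    ring
  -- total bound on correct-decoding mass
  have hsqB : Real.sqrt B ≤ (A:ℝ) * (102 / 100) := by
    have hBle : B ≤ ((A:ℝ) * (102 / 100)) ^ 2 := by
      rw [hBdef]
      nlinarith [hexpA, hApos]
    calc Real.sqrt B ≤ Real.sqrt (((A:ℝ) * (102 / 100)) ^ 2) := Real.sqrt_le_sqrt hBle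
      _ = (A:ℝ) * (102 / 100) := Real.sqrt_sq (by positivity)
  have hsqM : Real.sqrt M ≤ (100 / 141) * M := by
    have h141 : (141 / 100 : ℝ) ≤ Real.sqrt M := by
      rw [show (141 / 100 : ℝ) = Real.sqrt ((141 / 100) ^ 2) from
        (Real.sqrt_sq (by norm_num)).symm]
      apply Real.sqrt_le_sqrt
      have : (2:ℝ) ≤ M := by exact_mod_cast hM
      nlinarith
    have hms := Real.mul_self_sqrt (le_of_lt hMpos)
    nlinarith [Real.sqrt_nonneg (M:ℝ)]
  have htot : ∑ m, ∑ l ∈ Finset.Icc 1 A,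
      (∑ y : Fin T → Y, (if dec.φ y = m then (∏ t, Q (σ m l t) (y t)) else 0))
      ≤ (3 / 4) * ((A:ℝ) * M) := by
    have hm : ∀ m : Fin M, ∑ l ∈ Finset.Icc 1 A,
        (∑ y : Fin T → Y, (if dec.φ y = m then (∏ t, Q (σ m l t) (y t)) else 0))
        ≤ (A:ℝ) * (C / N) + Real.sqrt B * Real.sqrt (p m) := by
      intro m
      calc ∑ l ∈ Finset.Icc 1 A,
          (∑ y : Fin T → Y, (if dec.φ y = m then (∏ t, Q (σ m l t) (y t)) else 0))
          ≤ ∑ l ∈ Finset.Icc 1 A,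
            (C / N + ∑ y : Fin T → Y, w y * rt m l y * ind m y) :=
            Finset.sum_le_sum fun l _ => hcorr m l
        _ = (A:ℝ) * (C / N) + ∑ l ∈ Finset.Icc 1 A,
            (∑ y : Fin T → Y, w y * rt m l y * ind m y) := by
            rw [Finset.sum_add_distrib, Finset.sum_const, hcardIcc, nsmul_eq_mul]
        _ = (A:ℝ) * (C / N) + ∑ y : Fin T → Y, w y * S m y * ind m y := by rw [hswapS]
        _ ≤ (A:ℝ) * (C / N) + Real.sqrt B * Real.sqrt (p m) :=
            add_le_add_right (hCS m) _
    calc ∑ m, ∑ l ∈ Finset.Icc 1 A,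
        (∑ y : Fin T → Y, (if dec.φ y = m then (∏ t, Q (σ m l t) (y t)) else 0))
        ≤ ∑ m : Fin M, ((A:ℝ) * (C / N) + Real.sqrt B * Real.sqrt (p m)) :=
          Finset.sum_le_sum fun m _ => hm m
      _ = (M:ℝ) * ((A:ℝ) * (C / N)) + Real.sqrt B * ∑ m, Real.sqrt (p m) := by
          rw [Finset.sum_add_distrib, Finset.sum_const, Finset.card_univ, Fintype.card_fin,
            nsmul_eq_mul, ← Finset.mul_sum]
      _ ≤ (M:ℝ) * ((A:ℝ) * (1 / 100)) + ((A:ℝ) * (102 / 100)) * ((100 / 141) * M) := by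
          apply add_le_add
          · apply mul_le_mul_of_nonneg_left _ (le_of_lt hMpos)
            exact mul_le_mul_of_nonneg_left hNC (le_of_lt hApos)
          · exact mul_le_mul hsqB (le_trans hsqp hsqM)
              (Finset.sum_nonneg fun m _ => Real.sqrt_nonneg _) (by positivity)
      _ ≤ (3 / 4) * ((A:ℝ) * M) := by nlinarith [hApos, hMpos]
  -- error probability identity
  have herr : errProb Q star c A dec = 1 - (1 / ((A:ℝ) * M)) * ∑ m, ∑ l ∈ Finset.Icc 1 A,
      (∑ y : Fin T → Y, (if dec.φ y = m then (∏ t, Q (σ m l t) (y t)) else 0)) := by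
    rw [errProb]
    have hinner : ∀ (m : Fin M) (l : ℕ),
        ∑ y : Fin T → Y, (if dec.φ y = m then (0:ℝ) else seqProb Q star (c m) l y)
        = 1 - ∑ y : Fin T → Y, (if dec.φ y = m then (∏ t, Q (σ m l t) (y t)) else 0) := by
      intro m l
      have hsplit : ∀ y : Fin T → Y, (if dec.φ y = m then (0:ℝ) else seqProb Q star (c m) l y)
          = (∏ t, Q (σ m l t) (y t))
            - (if dec.φ y = m then (∏ t, Q (σ m l t) (y t)) else 0) := by
        intro y
        rw [hseq m l y]
        split
        · rw [sub_self]
        · rw [sub_zero]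
      rw [Finset.sum_congr rfl fun y _ => hsplit y, Finset.sum_sub_distrib, hPsum]
    rw [Finset.sum_congr rfl fun m (_ : m ∈ Finset.univ) =>
      Finset.sum_congr rfl fun l (_ : l ∈ Finset.Icc 1 A) => hinner m l]
    have houter : ∑ m : Fin M, ∑ l ∈ Finset.Icc 1 A,
        (1 - ∑ y : Fin T → Y, (if dec.φ y = m then (∏ t, Q (σ m l t) (y t)) else 0))
        = (A:ℝ) * M - ∑ m, ∑ l ∈ Finset.Icc 1 A,
          (∑ y : Fin T → Y, (if dec.φ y = m then (∏ t, Q (σ m l t) (y t)) else 0)) := by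
      simp only [Finset.sum_sub_distrib, Finset.sum_const, hcardIcc, Finset.card_univ,
        Fintype.card_fin, nsmul_eq_mul, mul_one]
      ring
    rw [houter]
    have hAM : ((A:ℝ) * M) ≠ 0 := (mul_pos hApos hMpos).ne'
    first
    | (field_simp; ring)
    | field_simp
  rw [herr]
  have h34 : (1 / ((A:ℝ) * M)) * (∑ m, ∑ l ∈ Finset.Icc 1 A,
      (∑ y : Fin T → Y, (if dec.φ y = m then (∏ t, Q (σ m l t) (y t)) else 0))) ≤ 3 / 4 := by
    calc (1 / ((A:ℝ) * M)) * (∑ m, ∑ l ∈ Finset.Icc 1 A,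
        (∑ y : Fin T → Y, (if dec.φ y = m then (∏ t, Q (σ m l t) (y t)) else 0)))
        ≤ (1 / ((A:ℝ) * M)) * ((3 / 4) * ((A:ℝ) * M)) := by
          apply mul_le_mul_of_nonneg_left htot
          positivity
      _ = 3 / 4 := by
          field_simp
  linarith






end Async
end

section
/- (False-alarm bound.) Assume the codebook is randomly generated with all symbols of all codewords i.i.d. according to an input distribution P on 𝒳. There exists a polynomial p (depending only on |𝒳| and |𝒴|) such that for all threshold constants t₁, t₂ ∈ ℝ, all blocklengths N, all numbers of messages M ≥ 2, all asynchronism levels A ≥ 1, all messages m and starting times l: ∑_{m'≠m} ∑_{n=1}^{A+N−1} ∑_{i=1}^{min(N,n)} P_{m,l}(E(m',n,i)) ≤ p(N)·(M^{−(t₁+t₂−1)}·A + M^{−(t₂−1)}), where P_{m,l} averages over both the random codebook and the channel outputs when message m is sent starting at time l. -/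
open scoped BigOperators ENNReal

namespace Async

variable {X : Type*} {Y : Type*}

open scoped Classical in
/-- Real-valued indicator of a proposition. -/
noncomputable def ind (p : Prop) : ℝ := if p then 1 else 0

/-- Extension of a codeword to an `ℕ`-indexed sequence (`j`-th symbol is `c_{j+1}`). -/
def extX [Inhabited X] {N : ℕ} (c : Fin N → X) : ℕ → X :=
  fun j => if h : j < N then c ⟨j, h⟩ else default

/-- Extension of an output block to a time-indexed (`1`-based) sequence. -/
def extY [Inhabited Y] {T : ℕ} (y : Fin T → Y) : ℕ → Y :=
  fun t => if h : t - 1 < T then y ⟨t - 1, h⟩ else default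

open scoped Classical in
/-- Empirical joint distribution of the first `k` pairs of two sequences. -/
noncomputable def emp2 (k : ℕ) (x : ℕ → X) (y : ℕ → Y) : X × Y → ℝ :=
  fun p => (((Finset.range k).filter (fun j => x j = p.1 ∧ y j = p.2)).card : ℝ) / k

open scoped Classical in
/-- Empirical distribution of the first `k` entries of a sequence. -/
noncomputable def emp1 (k : ℕ) (y : ℕ → Y) : Y → ℝ :=
  fun b => (((Finset.range k).filter (fun j => y j = b)).card : ℝ) / k

/-- `e^{-x}` for `x ∈ [0,∞]` (equal to `0` at `x = ∞`). -/
noncomputable def expNeg (x : ℝ≥0∞) : ℝ := if x = ⊤ then 0 else Real.exp (-x.toReal)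

/-- Weight of a codebook whose symbols are i.i.d. according to `P`. -/
noncomputable def cbWeight [Fintype X] (P : X → ℝ) {M N : ℕ}
    (Cb : Fin M → Fin N → X) : ℝ :=
  ∏ μ : Fin M, ∏ j : Fin N, P (Cb μ j)

/-- The event `E(m,n,i) = ∩_{k=1}^{i} E(m,n,i,k)`: at time `n`, the last `i` output
symbols look sufficiently different from noise (divergence condition) and, for every
split point `k`, are sufficiently correlated with the codeword `c` of message `m`
(mutual information condition). Sequences are `1`-based in time; `c j` is the
`(j+1)`-th codeword symbol. -/
noncomputable def EventE [Fintype X] [Fintype Y] (Q : X → Y → ℝ) (star : X)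
    (t₁ t₂ : ℝ) (M : ℕ) (c : ℕ → X) (y : ℕ → Y) (n i : ℕ) : Prop :=
  (∀ k ∈ Finset.Icc 1 i,
      t₂ * Real.log M ≤
        (k : ℝ) * mi (emp2 k c (fun j => y (n - i + 1 + j)))
          + ((i - k : ℕ) : ℝ) *
            mi (emp2 (i - k) (fun j => c (k + j)) (fun j => y (n - i + k + 1 + j)))) ∧
  ENNReal.ofReal (t₁ * Real.log M) ≤
    (i : ℝ≥0∞) * klDiv (emp1 i (fun j => y (n - i + 1 + j))) (Q star)

section Helpers

variable {X : Type*} {Y : Type*}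

lemma ind_nonneg (p : Prop) : 0 ≤ ind p := by
  unfold ind; split <;> norm_num

lemma ind_le_one (p : Prop) : ind p ≤ 1 := by
  unfold ind; split <;> norm_num

lemma ind_mono {p q : Prop} (h : p → q) : ind p ≤ ind q := by
  classical
  unfold ind
  split
  · rw [if_pos (h (by assumption))]
  · split <;> norm_num

lemma ind_le_mul {p q r : Prop} (hq : p → q) (hr : p → r) :
    ind p ≤ ind q * ind r := by
  classical
  unfold ind
  split
  · rw [if_pos (hq (by assumption)), if_pos (hr (by assumption))]; norm_num
  · split <;> split <;> norm_num

/-- Generic fiberwise bound: if `F` is pointwise dominated on each fiber of `τ` by a product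
whose coordinatewise sums are at most 1, then the total sum is at most `C * |K|`. -/
lemma fiber_bound {ι α K : Type*} [Fintype ι] [DecidableEq ι] [Fintype α] [Fintype K] [DecidableEq K]
    (F : (ι → α) → ℝ) (τ : (ι → α) → K) (h : K → ι → α → ℝ) (C : ℝ)
    (hC : 0 ≤ C) (hh : ∀ κ i a, 0 ≤ h κ i a)
    (hpt : ∀ f, F f ≤ C * ∏ i, h (τ f) i (f i))
    (hsum : ∀ κ i, ∑ a, h κ i a ≤ 1) :
    ∑ f, F f ≤ C * Fintype.card K := by
  classical
  have step1 : ∑ f, F f ≤ ∑ f : ι → α, C * ∏ i, h (τ f) i (f i) :=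
    Finset.sum_le_sum fun f _ => hpt f
  have step2 : ∑ f : ι → α, C * ∏ i, h (τ f) i (f i)
      = ∑ κ : K, ∑ f ∈ Finset.univ.filter (fun f => τ f = κ), C * ∏ i, h (τ f) i (f i) :=
    (Finset.sum_fiberwise_of_maps_to (fun f _ => Finset.mem_univ (τ f)) _).symm
  have step3 : ∀ κ : K, ∑ f ∈ Finset.univ.filter (fun f => τ f = κ), C * ∏ i, h (τ f) i (f i)
      ≤ C := by
    intro κ
    have e1 : ∑ f ∈ Finset.univ.filter (fun f => τ f = κ), C * ∏ i, h (τ f) i (f i)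
        = ∑ f ∈ Finset.univ.filter (fun f => τ f = κ), C * ∏ i, h κ i (f i) := by
      refine Finset.sum_congr rfl fun f hf => ?_
      rw [(Finset.mem_filter.mp hf).2]
    rw [e1]
    have e2 : ∑ f ∈ Finset.univ.filter (fun f => τ f = κ), C * ∏ i, h κ i (f i)
        ≤ ∑ f : ι → α, C * ∏ i, h κ i (f i) := by
      refine Finset.sum_le_sum_of_subset_of_nonneg (Finset.filter_subset _ _) fun f _ _ => ?_
      exact mul_nonneg hC (Finset.prod_nonneg fun i _ => hh κ i (f i))
    refine e2.trans ?_
    rw [← Finset.mul_sum]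
    have e3 : ∑ f : ι → α, ∏ i, h κ i (f i) = ∏ i, ∑ a, h κ i a := by
      rw [← Finset.sum_prod_piFinset Finset.univ (fun i a => h κ i a)]
      rw [Fintype.piFinset_univ]
    rw [e3]
    have : ∏ i, ∑ a, h κ i a ≤ 1 :=
      Finset.prod_le_one (fun i _ => Finset.sum_nonneg fun a _ => hh κ i a)
        (fun i _ => hsum κ i)
    calc C * ∏ i, ∑ a, h κ i a ≤ C * 1 := by
          exact mul_le_mul_of_nonneg_left this hC
      _ = C := mul_one C
  calc ∑ f, F f ≤ _ := step1
    _ = _ := step2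
    _ ≤ ∑ _κ : K, C := Finset.sum_le_sum fun κ _ => step3 κ
    _ = C * Fintype.card K := by rw [Finset.sum_const, Finset.card_univ, nsmul_eq_mul, mul_comm]

end Helpers

section Counting

variable {X : Type*} {Y : Type*}

lemma sum_count {β : Type*} [Fintype β] [DecidableEq β] (i : ℕ) (u : ℕ → β) (g : β → ℝ) :
    ∑ j ∈ Finset.range i, g (u j)
      = ∑ b : β, (((Finset.range i).filter (fun j => u j = b)).card : ℝ) * g b := by
  rw [← Finset.sum_fiberwise_of_maps_to (g := u) (t := Finset.univ)
      (fun j _ => Finset.mem_univ (u j)) (fun j => g (u j))]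
  refine Finset.sum_congr rfl fun b _ => ?_
  rw [Finset.sum_congr rfl (fun j hj => by
    rw [(Finset.mem_filter.mp hj).2] : ∀ j ∈ (Finset.range i).filter (fun j => u j = b),
      g (u j) = g b), Finset.sum_const, nsmul_eq_mul]

lemma prod_count {β : Type*} [Fintype β] [DecidableEq β] (i : ℕ) (u : ℕ → β) (g : β → ℝ) :
    ∏ j ∈ Finset.range i, g (u j)
      = ∏ b : β, g b ^ (((Finset.range i).filter (fun j => u j = b)).card) := by
  rw [← Finset.prod_fiberwise_of_maps_to (g := u) (t := Finset.univ)
      (fun j _ => Finset.mem_univ (u j)) (fun j => g (u j))]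
  refine Finset.prod_congr rfl fun b _ => ?_
  rw [Finset.prod_congr rfl (fun j hj => by
    rw [(Finset.mem_filter.mp hj).2] : ∀ j ∈ (Finset.range i).filter (fun j => u j = b),
      g (u j) = g b), Finset.prod_const]

lemma count_total {β : Type*} [Fintype β] [DecidableEq β] (i : ℕ) (u : ℕ → β) :
    ∑ b : β, ((Finset.range i).filter (fun j => u j = b)).card = i := by
  conv_rhs => rw [← Finset.card_range i]
  exact (Finset.card_eq_sum_card_fiberwise fun j _ => Finset.mem_univ (u j)).symm

lemma count_pair_sumY [Fintype Y] [DecidableEq X] [DecidableEq Y]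
    (i : ℕ) (x : ℕ → X) (w : ℕ → Y) (a : X) :
    ∑ b : Y, ((Finset.range i).filter (fun j => x j = a ∧ w j = b)).card
      = ((Finset.range i).filter (fun j => x j = a)).card := by
  rw [Finset.card_eq_sum_card_fiberwise (f := w) (t := Finset.univ) (fun j _ => Finset.mem_univ _)]
  refine Finset.sum_congr rfl fun b _ => ?_
  rw [Finset.filter_filter]

lemma count_pair_sumX [Fintype X] [DecidableEq X] [DecidableEq Y]
    (i : ℕ) (x : ℕ → X) (w : ℕ → Y) (b : Y) :
    ∑ a : X, ((Finset.range i).filter (fun j => x j = a ∧ w j = b)).card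
      = ((Finset.range i).filter (fun j => w j = b)).card := by
  rw [Finset.card_eq_sum_card_fiberwise (f := x) (t := Finset.univ) (fun j _ => Finset.mem_univ _)]
  refine Finset.sum_congr rfl fun a _ => ?_
  rw [Finset.filter_filter]
  congr 1
  ext j
  simp only [Finset.mem_filter]
  tauto

/-- Gibbs' inequality in product (type) form: the i.i.d. weight of a sequence is at most the
weight it gets under its own empirical distribution. -/
lemma gibbs_count {β : Type*} [Fintype β] [DecidableEq β] (P : β → ℝ) (hP0 : ∀ b, 0 ≤ P b)
    (hP1 : ∑ b, P b ≤ 1) {i : ℕ} (hi : 0 < i) (u : ℕ → β) :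
    ∏ j ∈ Finset.range i, P (u j)
      ≤ ∏ j ∈ Finset.range i,
          ((((Finset.range i).filter (fun k => u k = u j)).card : ℝ) / i) := by
  classical
  set κ : β → ℕ := fun b => ((Finset.range i).filter (fun k => u k = b)).card with hκ
  set w : β → ℝ := fun b => (κ b : ℝ) / i with hw
  have hine : (i : ℝ) ≠ 0 := Nat.cast_ne_zero.mpr hi.ne'
  have hw0 : ∀ b, 0 ≤ w b := fun b => div_nonneg (Nat.cast_nonneg _) (Nat.cast_nonneg _)
  have hsw : ∑ b, w b = 1 := by
    rw [hw]
    rw [← Finset.sum_div]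
    rw [show ∑ b, (κ b : ℝ) = (i : ℝ) by rw [← Nat.cast_sum]; exact_mod_cast count_total i u]
    exact div_self hine
  set z : β → ℝ := fun b => P b / w b with hz
  have amgm : ∏ b, z b ^ w b ≤ ∑ b, w b * z b :=
    Real.geom_mean_le_arith_mean_weighted Finset.univ w z (fun b _ => hw0 b) hsw
      (fun b _ => div_nonneg (hP0 b) (hw0 b))
  have hwz : ∑ b, w b * z b ≤ 1 := by
    refine le_trans (Finset.sum_le_sum (fun b _ => ?_)) hP1
    by_cases hb : w b = 0
    · rw [hb, zero_mul]; exact hP0 b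
    · rw [hz]; rw [mul_div_cancel₀ _ hb]
  have key : ∏ b, P b ^ w b ≤ ∏ b, w b ^ w b := by
    have e : ∏ b, P b ^ w b = (∏ b, z b ^ w b) * ∏ b, w b ^ w b := by
      rw [← Finset.prod_mul_distrib]
      refine Finset.prod_congr rfl fun b _ => ?_
      by_cases hb : w b = 0
      · rw [hb, Real.rpow_zero, Real.rpow_zero, Real.rpow_zero]; norm_num
      · rw [← Real.mul_rpow (div_nonneg (hP0 b) (hw0 b)) (hw0 b)]
        rw [div_mul_cancel₀ _ hb]
    rw [e]
    calc (∏ b, z b ^ w b) * ∏ b, w b ^ w b ≤ 1 * ∏ b, w b ^ w b := by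
          refine mul_le_mul_of_nonneg_right (amgm.trans hwz) ?_
          exact Finset.prod_nonneg fun b _ => Real.rpow_nonneg (hw0 b) _
      _ = ∏ b, w b ^ w b := one_mul _
  have powstep : ∀ (f : β → ℝ), (∀ b, 0 ≤ f b) →
      ∏ b, f b ^ κ b = (∏ b, f b ^ w b) ^ i := by
    intro f hf
    rw [← Finset.prod_pow]
    refine Finset.prod_congr rfl fun b _ => ?_
    rw [← Real.rpow_natCast (f b ^ w b) i, ← Real.rpow_mul (hf b)]
    rw [show w b * (i : ℝ) = (κ b : ℝ) by rw [hw]; field_simp]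
    rw [Real.rpow_natCast]
  calc ∏ j ∈ Finset.range i, P (u j) = ∏ b, P b ^ κ b := prod_count i u P
    _ = (∏ b, P b ^ w b) ^ i := powstep P hP0
    _ ≤ (∏ b, w b ^ w b) ^ i := by
        refine pow_le_pow_left₀ ?_ key i
        exact Finset.prod_nonneg fun b _ => Real.rpow_nonneg (hP0 b) _
    _ = ∏ b, w b ^ κ b := (powstep w hw0).symm
    _ = ∏ j ∈ Finset.range i, w (u j) := (prod_count i u w).symm
    _ = _ := rfl

end Counting

section Core

variable {X : Type*} {Y : Type*}

lemma emp2_apply [Fintype X] [Fintype Y] [DecidableEq X] [DecidableEq Y]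
    (i : ℕ) (x : ℕ → X) (w : ℕ → Y) (p : X × Y) :
    emp2 i x w p
      = (((Finset.range i).filter (fun j => x j = p.1 ∧ w j = p.2)).card : ℝ) / i := by
  unfold emp2
  congr!

lemma emp1_apply [Fintype Y] [DecidableEq Y] (i : ℕ) (w : ℕ → Y) (b : Y) :
    emp1 i w b = (((Finset.range i).filter (fun j => w j = b)).card : ℝ) / i := by
  unfold emp1
  congr!

lemma margX_emp2 [Fintype X] [Fintype Y] [DecidableEq X] [DecidableEq Y]
    (i : ℕ) (x : ℕ → X) (w : ℕ → Y) (a : X) :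
    margX (emp2 i x w) a
      = (((Finset.range i).filter (fun j => x j = a)).card : ℝ) / i := by
  unfold margX
  simp only [emp2_apply]
  rw [← Finset.sum_div]
  congr 1
  rw [← Nat.cast_sum]
  exact_mod_cast count_pair_sumY i x w a

lemma margY_emp2 [Fintype X] [Fintype Y] [DecidableEq X] [DecidableEq Y]
    (i : ℕ) (x : ℕ → X) (w : ℕ → Y) (b : Y) :
    margY (emp2 i x w) b
      = (((Finset.range i).filter (fun j => w j = b)).card : ℝ) / i := by
  unfold margY
  simp only [emp2_apply]
  rw [← Finset.sum_div]
  congr 1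
  rw [← Nat.cast_sum]
  exact_mod_cast count_pair_sumX i x w b

/-- The key pointwise inequality: i.i.d. weight times `exp(i·I)` is dominated by the
conditional empirical weight. -/
lemma coreMI [Fintype X] [Fintype Y] [DecidableEq X] [DecidableEq Y]
    (P : X → ℝ) (hP0 : ∀ a, 0 ≤ P a) (hP1 : ∑ a, P a ≤ 1)
    {i : ℕ} (hi : 0 < i) (x : ℕ → X) (w : ℕ → Y) :
    (∏ j ∈ Finset.range i, P (x j)) * Real.exp ((i : ℝ) * mi (emp2 i x w))
      ≤ ∏ j ∈ Finset.range i,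
          ((((Finset.range i).filter (fun k => x k = x j ∧ w k = w j)).card : ℝ)
            / (((Finset.range i).filter (fun k => w k = w j)).card : ℝ)) := by
  classical
  have hine : (i : ℝ) ≠ 0 := Nat.cast_ne_zero.mpr hi.ne'
  set V := emp2 i x w with hV
  -- positivity of relevant counts
  have hcntp : ∀ j ∈ Finset.range i,
      0 < (((Finset.range i).filter (fun k => x k = x j ∧ w k = w j)).card : ℝ) := by
    intro j hj
    have : j ∈ (Finset.range i).filter (fun k => x k = x j ∧ w k = w j) :=
      Finset.mem_filter.mpr ⟨hj, rfl, rfl⟩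
    exact_mod_cast Finset.card_pos.mpr ⟨j, this⟩
  have hcntx : ∀ j ∈ Finset.range i,
      0 < (((Finset.range i).filter (fun k => x k = x j)).card : ℝ) := by
    intro j hj
    have : j ∈ (Finset.range i).filter (fun k => x k = x j) :=
      Finset.mem_filter.mpr ⟨hj, rfl⟩
    exact_mod_cast Finset.card_pos.mpr ⟨j, this⟩
  have hcnty : ∀ j ∈ Finset.range i,
      0 < (((Finset.range i).filter (fun k => w k = w j)).card : ℝ) := by
    intro j hj
    have : j ∈ (Finset.range i).filter (fun k => w k = w j) :=
      Finset.mem_filter.mpr ⟨hj, rfl⟩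
    exact_mod_cast Finset.card_pos.mpr ⟨j, this⟩
  have hVp : ∀ j ∈ Finset.range i, 0 < V (x j, w j) := by
    intro j hj
    rw [hV, emp2_apply]
    exact div_pos (hcntp j hj) (by exact_mod_cast hi)
  have hVx : ∀ j ∈ Finset.range i, 0 < margX V (x j) := by
    intro j hj
    rw [hV, margX_emp2]
    exact div_pos (hcntx j hj) (by exact_mod_cast hi)
  have hVy : ∀ j ∈ Finset.range i, 0 < margY V (w j) := by
    intro j hj
    rw [hV, margY_emp2]
    exact div_pos (hcnty j hj) (by exact_mod_cast hi)
  -- step (a): exp(i·mi) as a product of ratios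
  set r : ℕ → ℝ := fun j => V (x j, w j) / (margX V (x j) * margY V (w j)) with hr
  have ha : (i : ℝ) * mi V = ∑ j ∈ Finset.range i, Real.log (r j) := by
    have hsc := sum_count i (fun j => (x j, w j))
      (fun p => Real.log (V p / (margX V p.1 * margY V p.2)))
    rw [hr]
    simp only []
    rw [hsc]
    unfold mi
    rw [Finset.mul_sum]
    refine Finset.sum_congr rfl fun p _ => ?_
    have hfc : ((Finset.range i).filter (fun j => (x j, w j) = p)).card
        = ((Finset.range i).filter (fun j => x j = p.1 ∧ w j = p.2)).card := by
      congr 1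
      apply Finset.filter_congr
      intro j _
      simp [Prod.ext_iff]
    rw [hfc, hV, emp2_apply]
    field_simp
    try ring
  have hexp : Real.exp ((i : ℝ) * mi V) = ∏ j ∈ Finset.range i, r j := by
    rw [ha, Real.exp_sum]
    refine Finset.prod_congr rfl fun j hj => ?_
    exact Real.exp_log (div_pos (hVp j hj) (mul_pos (hVx j hj) (hVy j hj)))
  -- step (b): Gibbs
  have hb : ∏ j ∈ Finset.range i, P (x j) ≤ ∏ j ∈ Finset.range i, margX V (x j) := by
    refine (gibbs_count P hP0 hP1 hi x).trans_eq ?_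
    refine Finset.prod_congr rfl fun j hj => ?_
    rw [hV, margX_emp2]
  -- combine
  rw [hexp]
  have hrnn : 0 ≤ ∏ j ∈ Finset.range i, r j := by
    refine Finset.prod_nonneg fun j hj => ?_
    exact le_of_lt (div_pos (hVp j hj) (mul_pos (hVx j hj) (hVy j hj)))
  calc (∏ j ∈ Finset.range i, P (x j)) * ∏ j ∈ Finset.range i, r j
      ≤ (∏ j ∈ Finset.range i, margX V (x j)) * ∏ j ∈ Finset.range i, r j :=
        mul_le_mul_of_nonneg_right hb hrnn
    _ = ∏ j ∈ Finset.range i, (margX V (x j) * r j) := (Finset.prod_mul_distrib).symm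
    _ = _ := by
        refine Finset.prod_congr rfl fun j hj => ?_
        rw [hr]
        simp only []
        rw [hV, emp2_apply, margX_emp2, margY_emp2]
        have h1 := (hcntp j hj).ne'
        have h2 := (hcntx j hj).ne'
        have h3 := (hcnty j hj).ne'
        field_simp
        try ring

end Core

section LemA

variable {X : Type*} {Y : Type*}

/-- Reindexing a product over `{j : Fin N | j < i}` as a product over `range i`. -/
lemma prod_fin_lt {β : Type*} [CommMonoid β] {N i : ℕ} (hN : 0 < N) (hiN : i ≤ N) (G : ℕ → β) :
    ∏ j ∈ Finset.univ.filter (fun j : Fin N => (j : ℕ) < i), G (j : ℕ)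
      = ∏ j ∈ Finset.range i, G j := by
  refine Finset.prod_nbij' (fun j => (j : ℕ)) (fun k => ⟨k % N, Nat.mod_lt k hN⟩)
    ?_ ?_ ?_ ?_ ?_
  · intro a ha
    exact Finset.mem_range.mpr (Finset.mem_filter.mp ha).2
  · intro k hk
    have hk' : k < i := Finset.mem_range.mp hk
    refine Finset.mem_filter.mpr ⟨Finset.mem_univ _, ?_⟩
    simp only []
    rw [Nat.mod_eq_of_lt (lt_of_lt_of_le hk' hiN)]
    exact hk'
  · intro a _
    ext
    simp [Nat.mod_eq_of_lt a.isLt]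
  · intro k hk
    have hk' : k < i := Finset.mem_range.mp hk
    simp [Nat.mod_eq_of_lt (lt_of_lt_of_le hk' hiN)]
  · intro a _
    rfl

/-- Type-counting bound for the mutual-information event, over a random codeword. -/
lemma lemA [Fintype X] [Fintype Y] [DecidableEq X] [DecidableEq Y] [Inhabited X]
    (P : X → ℝ) (hP : IsDist P) (w : ℕ → Y) (θ : ℝ) {i N : ℕ} (hi : 1 ≤ i) (hiN : i ≤ N) :
    ∑ c : Fin N → X, (∏ j, P (c j)) * ind (θ ≤ (i : ℝ) * mi (emp2 i (extX c) w))
      ≤ Real.exp (-θ) * ((i : ℝ) + 1) ^ (Fintype.card X * Fintype.card Y) := by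
  classical
  have hN : 0 < N := lt_of_lt_of_le hi hiN
  have hipos : 0 < i := hi
  have cardK : ((Fintype.card (X × Y → Fin (i + 1)) : ℕ) : ℝ)
      = ((i : ℝ) + 1) ^ (Fintype.card X * Fintype.card Y) := by
    rw [Fintype.card_fun, Fintype.card_fin, Fintype.card_prod]
    push_cast
    ring
  have cntle : ∀ (c : Fin N → X) (p : X × Y),
      ((Finset.range i).filter (fun j => extX c j = p.1 ∧ w j = p.2)).card < i + 1 := by
    intro c p
    have := Finset.card_filter_le (Finset.range i) (fun j => extX c j = p.1 ∧ w j = p.2)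
    rw [Finset.card_range] at this
    omega
  set τ : (Fin N → X) → (X × Y → Fin (i + 1)) := fun c p =>
    ⟨((Finset.range i).filter (fun j => extX c j = p.1 ∧ w j = p.2)).card, cntle c p⟩ with hτ
  set h : (X × Y → Fin (i + 1)) → Fin N → X → ℝ := fun κ j a =>
    if (j : ℕ) < i then
      ((κ (a, w (j : ℕ)) : ℕ) : ℝ) / (∑ a' : X, ((κ (a', w (j : ℕ)) : ℕ) : ℝ))
    else P a with hh
  have hhnn : ∀ κ j a, 0 ≤ h κ j a := by
    intro κ j a
    simp only [hh]
    split
    · exact div_nonneg (Nat.cast_nonneg _) (Finset.sum_nonneg fun _ _ => Nat.cast_nonneg _)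
    · exact hP.1 a
  have hsum : ∀ κ j, ∑ a, h κ j a ≤ 1 := by
    intro κ j
    simp only [hh]
    split
    · rw [← Finset.sum_div]
      by_cases hz : (∑ a' : X, ((κ (a', w (j : ℕ)) : ℕ) : ℝ)) = 0
      · rw [hz, div_zero]; norm_num
      · rw [div_self hz]
    · exact le_of_eq hP.2
  have hpt : ∀ c : Fin N → X,
      (∏ j, P (c j)) * ind (θ ≤ (i : ℝ) * mi (emp2 i (extX c) w))
        ≤ Real.exp (-θ) * ∏ j, h (τ c) j (c j) := by
    intro c
    have hprodnn : 0 ≤ ∏ j, h (τ c) j (c j) :=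
      Finset.prod_nonneg fun j _ => hhnn _ j (c j)
    by_cases hev : θ ≤ (i : ℝ) * mi (emp2 i (extX c) w)
    · rw [ind, if_pos hev, mul_one]
      have hxc : ∀ j : Fin N, extX c (j : ℕ) = c j := by
        intro j
        rw [extX, dif_pos j.isLt]
      have e1 : ∏ j ∈ Finset.univ.filter (fun j : Fin N => (j : ℕ) < i), P (c j)
          = ∏ j ∈ Finset.range i, P (extX c j) := by
        rw [← prod_fin_lt hN hiN (fun j => P (extX c j))]
        exact Finset.prod_congr rfl fun j _ => by rw [hxc j]
      have e2 : ∏ j ∈ Finset.univ.filter (fun j : Fin N => (j : ℕ) < i), h (τ c) j (c j)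
          = ∏ j ∈ Finset.range i,
              ((((Finset.range i).filter
                  (fun k => extX c k = extX c j ∧ w k = w j)).card : ℝ)
                / (((Finset.range i).filter (fun k => w k = w j)).card : ℝ)) := by
        rw [← prod_fin_lt hN hiN (fun j =>
          ((((Finset.range i).filter
              (fun k => extX c k = extX c j ∧ w k = w j)).card : ℝ)
            / (((Finset.range i).filter (fun k => w k = w j)).card : ℝ)))]
        refine Finset.prod_congr rfl fun j hj => ?_
        have hji : (j : ℕ) < i := (Finset.mem_filter.mp hj).2
        simp only [hh, hτ, if_pos hji]
        rw [hxc j]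
        congr 1
        rw [← Nat.cast_sum]
        congr 1
        exact count_pair_sumX i (extX c) w (w (j : ℕ))
      have e3 : ∏ j ∈ Finset.univ.filter (fun j : Fin N => ¬ (j : ℕ) < i), h (τ c) j (c j)
          = ∏ j ∈ Finset.univ.filter (fun j : Fin N => ¬ (j : ℕ) < i), P (c j) := by
        refine Finset.prod_congr rfl fun j hj => ?_
        simp only [hh, if_neg (Finset.mem_filter.mp hj).2]
      have hBnn : 0 ≤ ∏ j ∈ Finset.univ.filter (fun j : Fin N => ¬ (j : ℕ) < i), P (c j) :=
        Finset.prod_nonneg fun j _ => hP.1 (c j)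
      have hRnn : 0 ≤ ∏ j ∈ Finset.range i,
          ((((Finset.range i).filter
              (fun k => extX c k = extX c j ∧ w k = w j)).card : ℝ)
            / (((Finset.range i).filter (fun k => w k = w j)).card : ℝ)) :=
        Finset.prod_nonneg fun j _ => div_nonneg (Nat.cast_nonneg _) (Nat.cast_nonneg _)
      have core := coreMI P hP.1 (le_of_eq hP.2) hipos (extX c) w
      have hAR : ∏ j ∈ Finset.range i, P (extX c j)
          ≤ Real.exp (-θ) * ∏ j ∈ Finset.range i,
              ((((Finset.range i).filter
                  (fun k => extX c k = extX c j ∧ w k = w j)).card : ℝ)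
                / (((Finset.range i).filter (fun k => w k = w j)).card : ℝ)) := by
        have hid : ∏ j ∈ Finset.range i, P (extX c j)
            = ((∏ j ∈ Finset.range i, P (extX c j)) *
                Real.exp ((i : ℝ) * mi (emp2 i (extX c) w))) *
              Real.exp (-((i : ℝ) * mi (emp2 i (extX c) w))) := by
          rw [mul_assoc, ← Real.exp_add, add_neg_cancel, Real.exp_zero, mul_one]
        rw [hid]
        refine le_trans (mul_le_mul_of_nonneg_right core (Real.exp_nonneg _)) ?_
        rw [mul_comm]
        refine mul_le_mul_of_nonneg_right ?_ hRnn
        exact Real.exp_le_exp.mpr (neg_le_neg hev)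
      calc ∏ j, P (c j)
          = (∏ j ∈ Finset.univ.filter (fun j : Fin N => (j : ℕ) < i), P (c j)) *
              ∏ j ∈ Finset.univ.filter (fun j : Fin N => ¬ (j : ℕ) < i), P (c j) :=
            (Finset.prod_filter_mul_prod_filter_not _ _ _).symm
        _ ≤ Real.exp (-θ) * ((∏ j ∈ Finset.univ.filter (fun j : Fin N => (j : ℕ) < i),
              h (τ c) j (c j)) *
              ∏ j ∈ Finset.univ.filter (fun j : Fin N => ¬ (j : ℕ) < i), h (τ c) j (c j)) := by
            rw [e1, e2, e3]
            refine le_trans (mul_le_mul_of_nonneg_right hAR hBnn) (le_of_eq (by ring))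
        _ = Real.exp (-θ) * ∏ j, h (τ c) j (c j) := by
            rw [Finset.prod_filter_mul_prod_filter_not]
    · rw [ind, if_neg hev, mul_zero]
      exact mul_nonneg (Real.exp_nonneg _) hprodnn
  have main := fiber_bound
    (F := fun c : Fin N → X => (∏ j, P (c j)) * ind (θ ≤ (i : ℝ) * mi (emp2 i (extX c) w)))
    (τ := τ) (h := h) (C := Real.exp (-θ)) (Real.exp_nonneg _) hhnn hpt hsum
  rw [cardK] at main
  exact main

end LemA

section LemB

variable {X : Type*} {Y : Type*}

lemma extY_window [Inhabited Y] {T n i : ℕ} (hin : i ≤ n) (hnT : n ≤ T)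
    (y : Fin T → Y) (j : ℕ) (hj : j < i) :
    extY y (n - i + 1 + j) = y ⟨n - i + j, by omega⟩ := by
  unfold extY
  have hlt : n - i + 1 + j - 1 < T := by omega
  rw [dif_pos hlt]
  congr 1
  exact Fin.ext (by show n - i + 1 + j - 1 = n - i + j; omega)

lemma window_prod {Y : Type*} {β : Type*} [CommMonoid β] [Inhabited Y] {T n i : ℕ}
    (hi1 : 1 ≤ i) (hin : i ≤ n) (hnT : n ≤ T) (y : Fin T → Y) (g : Y → β) :
    ∏ t ∈ Finset.univ.filter (fun t : Fin T => n - i ≤ (t : ℕ) ∧ (t : ℕ) < n), g (y t)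
      = ∏ j ∈ Finset.range i, g (extY y (n - i + 1 + j)) := by
  have hT : 0 < T := by omega
  refine Finset.prod_nbij' (fun t => (t : ℕ) - (n - i))
    (fun j => ⟨(n - i + j) % T, Nat.mod_lt _ hT⟩) ?_ ?_ ?_ ?_ ?_
  · intro t ht
    have h2 := (Finset.mem_filter.mp ht).2
    exact Finset.mem_range.mpr (by omega)
  · intro j hj
    have hj' : j < i := Finset.mem_range.mp hj
    refine Finset.mem_filter.mpr ⟨Finset.mem_univ _, ?_⟩
    simp only []
    rw [Nat.mod_eq_of_lt (by omega)]
    omega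
  · intro t ht
    have h2 := (Finset.mem_filter.mp ht).2
    ext
    show (n - i + ((t : ℕ) - (n - i))) % T = (t : ℕ)
    rw [show n - i + ((t : ℕ) - (n - i)) = (t : ℕ) by omega, Nat.mod_eq_of_lt t.isLt]
  · intro j hj
    have hj' : j < i := Finset.mem_range.mp hj
    show ((n - i + j) % T) - (n - i) = j
    rw [Nat.mod_eq_of_lt (by omega)]
    omega
  · intro t ht
    have hmem := (Finset.mem_filter.mp ht).2
    rw [extY_window hin hnT y _ (by omega : (t : ℕ) - (n - i) < i)]
    refine congrArg g (congrArg y (Fin.ext ?_))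
    show (t : ℕ) = n - i + ((t : ℕ) - (n - i))
    omega

/-- Sanov-type bound: probability that a noise window looks atypical for the noise
distribution. -/
lemma lemB [Fintype Y] [DecidableEq Y] [Inhabited Y]
    {T : ℕ} (p : Fin T → Y → ℝ) (hp : ∀ t, IsDist (p t))
    (Q₀ : Y → ℝ) (hQ₀ : IsDist Q₀) {n i : ℕ} (hi : 1 ≤ i) (hin : i ≤ n) (hnT : n ≤ T)
    (hwin : ∀ t : Fin T, n - i ≤ (t : ℕ) → (t : ℕ) < n → p t = Q₀) (θ : ℝ) :
    ∑ y : Fin T → Y, (∏ t, p t (y t)) *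
        ind (ENNReal.ofReal θ ≤ (i : ℝ≥0∞) *
          klDiv (emp1 i (fun j => extY y (n - i + 1 + j))) Q₀)
      ≤ Real.exp (-θ) * ((i : ℝ) + 1) ^ (Fintype.card Y) := by
  classical
  have hipos : 0 < i := hi
  have hine : (i : ℝ) ≠ 0 := Nat.cast_ne_zero.mpr hipos.ne'
  have hpow1 : (1 : ℝ) ≤ ((i : ℝ) + 1) ^ (Fintype.card Y) := by
    refine one_le_pow₀ ?_
    have : (0 : ℝ) ≤ (i : ℝ) := Nat.cast_nonneg _
    linarith
  by_cases hθ : 0 < θ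
  swap
  · have h1 : ∑ y : Fin T → Y, (∏ t, p t (y t)) *
        ind (ENNReal.ofReal θ ≤ (i : ℝ≥0∞) *
          klDiv (emp1 i (fun j => extY y (n - i + 1 + j))) Q₀)
        ≤ ∑ y : Fin T → Y, ∏ t, p t (y t) := by
      refine Finset.sum_le_sum fun y _ => ?_
      have hnn : 0 ≤ ∏ t, p t (y t) := Finset.prod_nonneg fun t _ => (hp t).1 _
      calc (∏ t, p t (y t)) * ind _ ≤ (∏ t, p t (y t)) * 1 :=
            mul_le_mul_of_nonneg_left (ind_le_one _) hnn
        _ = ∏ t, p t (y t) := mul_one _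
    have h2 : ∑ y : Fin T → Y, ∏ t, p t (y t) = 1 := by
      rw [← Fintype.piFinset_univ, Finset.sum_prod_piFinset]
      rw [Finset.prod_congr rfl (fun t _ => (hp t).2)]
      exact Finset.prod_const_one
    rw [h2] at h1
    have h3 : (1 : ℝ) ≤ Real.exp (-θ) := by
      rw [← Real.exp_zero]
      exact Real.exp_le_exp.mpr (by linarith)
    calc _ ≤ (1 : ℝ) := h1
      _ ≤ Real.exp (-θ) * 1 := by linarith
      _ ≤ Real.exp (-θ) * ((i : ℝ) + 1) ^ (Fintype.card Y) :=
          mul_le_mul_of_nonneg_left hpow1 (Real.exp_nonneg _)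
  · have cardK : ((Fintype.card (Y → Fin (i + 1)) : ℕ) : ℝ)
        = ((i : ℝ) + 1) ^ (Fintype.card Y) := by
      rw [Fintype.card_fun, Fintype.card_fin]
      push_cast
      ring
    have cntle : ∀ (y : Fin T → Y) (b : Y),
        ((Finset.range i).filter (fun j => extY y (n - i + 1 + j) = b)).card < i + 1 := by
      intro y b
      have := Finset.card_filter_le (Finset.range i) (fun j => extY y (n - i + 1 + j) = b)
      rw [Finset.card_range] at this
      omega
    set τ : (Fin T → Y) → (Y → Fin (i + 1)) := fun y b =>
      ⟨((Finset.range i).filter (fun j => extY y (n - i + 1 + j) = b)).card, cntle y b⟩ with hτ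
    set h : (Y → Fin (i + 1)) → Fin T → Y → ℝ := fun κ t b =>
      if n - i ≤ (t : ℕ) ∧ (t : ℕ) < n then
        ((κ b : ℕ) : ℝ) / (∑ b' : Y, ((κ b' : ℕ) : ℝ))
      else p t b with hh
    have hhnn : ∀ κ t b, 0 ≤ h κ t b := by
      intro κ t b
      simp only [hh]
      split
      · exact div_nonneg (Nat.cast_nonneg _) (Finset.sum_nonneg fun _ _ => Nat.cast_nonneg _)
      · exact (hp t).1 b
    have hsum : ∀ κ t, ∑ b, h κ t b ≤ 1 := by
      intro κ t
      simp only [hh]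
      split
      · rw [← Finset.sum_div]
        by_cases hz : (∑ b' : Y, ((κ b' : ℕ) : ℝ)) = 0
        · rw [hz, div_zero]; norm_num
        · rw [div_self hz]
      · exact le_of_eq (hp t).2
    have hpt : ∀ y : Fin T → Y,
        (∏ t, p t (y t)) * ind (ENNReal.ofReal θ ≤ (i : ℝ≥0∞) *
          klDiv (emp1 i (fun j => extY y (n - i + 1 + j))) Q₀)
          ≤ Real.exp (-θ) * ∏ t, h (τ y) t (y t) := by
      intro y
      have hprodnn : 0 ≤ ∏ t, h (τ y) t (y t) :=
        Finset.prod_nonneg fun t _ => hhnn _ t (y t)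
      by_cases hev : ENNReal.ofReal θ ≤ (i : ℝ≥0∞) * klDiv (emp1 i (fun j => extY y (n - i + 1 + j))) Q₀
      swap
      · rw [ind, if_neg hev, mul_zero]
        exact mul_nonneg (Real.exp_nonneg _) hprodnn
      rw [ind, if_pos hev, mul_one]
      have hcnttot : ∑ b : Y, ((Finset.range i).filter (fun j => extY y (n - i + 1 + j) = b)).card = i :=
        count_total i (fun j => extY y (n - i + 1 + j))
      have hemp1 : ∀ b, emp1 i (fun j => extY y (n - i + 1 + j)) b
          = (((Finset.range i).filter (fun j => extY y (n - i + 1 + j) = b)).card : ℝ) / i := fun b =>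
        emp1_apply i (fun j => extY y (n - i + 1 + j)) b
      -- key window inequality over `range i`
      have hwinkey : ∏ j ∈ Finset.range i, Q₀ (extY y (n - i + 1 + j))
          ≤ Real.exp (-θ) * ∏ j ∈ Finset.range i,
              ((((Finset.range i).filter (fun k => extY y (n - i + 1 + k) = extY y (n - i + 1 + j))).card : ℝ) / i) := by
        have hqnn : 0 ≤ ∏ j ∈ Finset.range i,
            ((((Finset.range i).filter (fun k => extY y (n - i + 1 + k) = extY y (n - i + 1 + j))).card : ℝ) / i) :=
          Finset.prod_nonneg fun j _ => div_nonneg (Nat.cast_nonneg _) (Nat.cast_nonneg _)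
        by_cases hgood : ∀ b, Q₀ b = 0 → emp1 i (fun j => extY y (n - i + 1 + j)) b = 0
        · -- finite divergence regime
          have hkd : klDiv (emp1 i (fun j => extY y (n - i + 1 + j))) Q₀ = ENNReal.ofReal (klDivR (emp1 i (fun j => extY y (n - i + 1 + j))) Q₀) := by
            rw [klDiv, if_pos hgood]
            rfl
          rw [hkd] at hev
          by_cases hDpos : 0 < klDivR (emp1 i (fun j => extY y (n - i + 1 + j))) Q₀
          swap
          · exfalso
            have hz : ENNReal.ofReal (klDivR (emp1 i (fun j => extY y (n - i + 1 + j))) Q₀) = 0 := by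
              rw [ENNReal.ofReal_eq_zero]
              linarith [not_lt.mp hDpos]
            rw [hz, mul_zero] at hev
            have h0 := le_antisymm hev zero_le
            rw [ENNReal.ofReal_eq_zero] at h0
            linarith
          have hθiD : θ ≤ (i : ℝ) * klDivR (emp1 i (fun j => extY y (n - i + 1 + j))) Q₀ := by
            have e : (i : ℝ≥0∞) * ENNReal.ofReal (klDivR (emp1 i (fun j => extY y (n - i + 1 + j))) Q₀)
                = ENNReal.ofReal ((i : ℝ) * klDivR (emp1 i (fun j => extY y (n - i + 1 + j))) Q₀) := by
              rw [ENNReal.ofReal_mul (Nat.cast_nonneg i), ENNReal.ofReal_natCast]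
            rw [e] at hev
            exact (ENNReal.ofReal_le_ofReal_iff
              (mul_nonneg (Nat.cast_nonneg i) hDpos.le)).mp hev
          have hqpos : ∀ j ∈ Finset.range i, 0 < emp1 i (fun j => extY y (n - i + 1 + j)) (extY y (n - i + 1 + j)) := by
            intro j hj
            rw [hemp1]
            refine div_pos ?_ (by exact_mod_cast hipos)
            have hmem : j ∈ (Finset.range i).filter (fun k => extY y (n - i + 1 + k) = extY y (n - i + 1 + j)) :=
              Finset.mem_filter.mpr ⟨hj, rfl⟩
            exact_mod_cast Finset.card_pos.mpr ⟨j, hmem⟩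
          have hQpos : ∀ j ∈ Finset.range i, 0 < Q₀ (extY y (n - i + 1 + j)) := by
            intro j hj
            rcases (hQ₀.1 (extY y (n - i + 1 + j))).lt_or_eq with hlt | heq
            · exact hlt
            · exact absurd (hgood (extY y (n - i + 1 + j)) heq.symm) (hqpos j hj).ne'
          -- the exact identity  ∏ Q₀ = (∏ q) · exp(−i·D)
          have hiD : (i : ℝ) * klDivR (emp1 i (fun j => extY y (n - i + 1 + j))) Q₀
              = ∑ j ∈ Finset.range i, Real.log (emp1 i (fun j => extY y (n - i + 1 + j)) (extY y (n - i + 1 + j)) / Q₀ (extY y (n - i + 1 + j))) := by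
            rw [sum_count i (fun j => extY y (n - i + 1 + j)) (fun b => Real.log (emp1 i (fun j => extY y (n - i + 1 + j)) b / Q₀ b))]
            unfold klDivR
            rw [Finset.mul_sum]
            refine Finset.sum_congr rfl fun b _ => ?_
            rw [hemp1 b]
            field_simp
            try ring
          have hprodid : ∏ j ∈ Finset.range i, Q₀ (extY y (n - i + 1 + j))
              = (∏ j ∈ Finset.range i, emp1 i (fun j => extY y (n - i + 1 + j)) (extY y (n - i + 1 + j))) *
                  Real.exp (-((i : ℝ) * klDivR (emp1 i (fun j => extY y (n - i + 1 + j))) Q₀)) := by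
            rw [hiD, ← Finset.sum_neg_distrib, Real.exp_sum, ← Finset.prod_mul_distrib]
            refine Finset.prod_congr rfl fun j hj => ?_
            rw [Real.exp_neg, Real.exp_log (div_pos (hqpos j hj) (hQpos j hj)), inv_div]
            have hqne := (hqpos j hj).ne'
            field_simp
          rw [hprodid]
          have hexple : Real.exp (-((i : ℝ) * klDivR (emp1 i (fun j => extY y (n - i + 1 + j))) Q₀)) ≤ Real.exp (-θ) :=
            Real.exp_le_exp.mpr (neg_le_neg hθiD)
          have hqprodnn : 0 ≤ ∏ j ∈ Finset.range i, emp1 i (fun j => extY y (n - i + 1 + j)) (extY y (n - i + 1 + j)) :=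
            Finset.prod_nonneg fun j hj => (hqpos j hj).le
          calc (∏ j ∈ Finset.range i, emp1 i (fun j => extY y (n - i + 1 + j)) (extY y (n - i + 1 + j))) *
                Real.exp (-((i : ℝ) * klDivR (emp1 i (fun j => extY y (n - i + 1 + j))) Q₀))
              ≤ (∏ j ∈ Finset.range i, emp1 i (fun j => extY y (n - i + 1 + j)) (extY y (n - i + 1 + j))) * Real.exp (-θ) :=
                mul_le_mul_of_nonneg_left hexple hqprodnn
            _ = Real.exp (-θ) * ∏ j ∈ Finset.range i, emp1 i (fun j => extY y (n - i + 1 + j)) (extY y (n - i + 1 + j)) := mul_comm _ _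
            _ = Real.exp (-θ) * ∏ j ∈ Finset.range i,
                  ((((Finset.range i).filter (fun k => extY y (n - i + 1 + k) = extY y (n - i + 1 + j))).card : ℝ) / i) := by
                rw [Finset.prod_congr rfl fun j _ => hemp1 (extY y (n - i + 1 + j))]
        · -- infinite divergence: some noise-impossible symbol occurs in the window
          obtain ⟨b, hb⟩ := not_forall.mp hgood
          have hQb : Q₀ b = 0 ∧ ¬ emp1 i (fun j => extY y (n - i + 1 + j)) b = 0 := by
            by_cases h1 : Q₀ b = 0 <;> by_cases h2 : emp1 i (fun j => extY y (n - i + 1 + j)) b = 0 <;> tauto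
          have hcard : ((Finset.range i).filter (fun j => extY y (n - i + 1 + j) = b)).Nonempty := by
            rw [← Finset.card_pos]
            by_contra hcp
            have hz : ((Finset.range i).filter (fun j => extY y (n - i + 1 + j) = b)).card = 0 := by omega
            exact hQb.2 (by rw [hemp1, hz]; norm_num)
          obtain ⟨j, hj⟩ := hcard
          have hzero : ∏ j ∈ Finset.range i, Q₀ (extY y (n - i + 1 + j)) = 0 := by
            refine Finset.prod_eq_zero (Finset.mem_filter.mp hj).1 ?_
            rw [(Finset.mem_filter.mp hj).2, hQb.1]
          rw [hzero]
          exact mul_nonneg (Real.exp_nonneg _) hqnn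
      -- assemble over all coordinates
      have e1 : ∏ t ∈ Finset.univ.filter
            (fun t : Fin T => n - i ≤ (t : ℕ) ∧ (t : ℕ) < n), p t (y t)
          = ∏ j ∈ Finset.range i, Q₀ (extY y (n - i + 1 + j)) := by
        rw [← window_prod hi hin hnT y Q₀]
        refine Finset.prod_congr rfl fun t ht => ?_
        have hm := (Finset.mem_filter.mp ht).2
        rw [hwin t hm.1 hm.2]
      have e2 : ∏ t ∈ Finset.univ.filter
            (fun t : Fin T => n - i ≤ (t : ℕ) ∧ (t : ℕ) < n), h (τ y) t (y t)
          = ∏ j ∈ Finset.range i,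
              ((((Finset.range i).filter (fun k => extY y (n - i + 1 + k) = extY y (n - i + 1 + j))).card : ℝ) / i) := by
        rw [← window_prod hi hin hnT y
          (fun b => (((Finset.range i).filter (fun k => extY y (n - i + 1 + k) = b)).card : ℝ) / i)]
        refine Finset.prod_congr rfl fun t ht => ?_
        have hm := (Finset.mem_filter.mp ht).2
        simp only [hh, hτ, if_pos hm]
        congr 1
        rw [show (∑ b' : Y, ((((Finset.range i).filter
            (fun j => extY y (n - i + 1 + j) = b')).card : ℕ) : ℝ)) = ((i : ℕ) : ℝ) by
          rw [← Nat.cast_sum]; exact_mod_cast hcnttot]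
      have e3 : ∏ t ∈ Finset.univ.filter
            (fun t : Fin T => ¬ (n - i ≤ (t : ℕ) ∧ (t : ℕ) < n)), h (τ y) t (y t)
          = ∏ t ∈ Finset.univ.filter
            (fun t : Fin T => ¬ (n - i ≤ (t : ℕ) ∧ (t : ℕ) < n)), p t (y t) := by
        refine Finset.prod_congr rfl fun t ht => ?_
        simp only [hh, if_neg (Finset.mem_filter.mp ht).2]
      have hBnn : 0 ≤ ∏ t ∈ Finset.univ.filter
          (fun t : Fin T => ¬ (n - i ≤ (t : ℕ) ∧ (t : ℕ) < n)), p t (y t) :=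
        Finset.prod_nonneg fun t _ => (hp t).1 _
      calc ∏ t, p t (y t)
          = (∏ t ∈ Finset.univ.filter
              (fun t : Fin T => n - i ≤ (t : ℕ) ∧ (t : ℕ) < n), p t (y t)) *
            ∏ t ∈ Finset.univ.filter
              (fun t : Fin T => ¬ (n - i ≤ (t : ℕ) ∧ (t : ℕ) < n)), p t (y t) :=
            (Finset.prod_filter_mul_prod_filter_not _ _ _).symm
        _ ≤ Real.exp (-θ) * ((∏ t ∈ Finset.univ.filter
              (fun t : Fin T => n - i ≤ (t : ℕ) ∧ (t : ℕ) < n), h (τ y) t (y t)) *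
            ∏ t ∈ Finset.univ.filter
              (fun t : Fin T => ¬ (n - i ≤ (t : ℕ) ∧ (t : ℕ) < n)), h (τ y) t (y t)) := by
            rw [e1, e2, e3]
            refine le_trans (mul_le_mul_of_nonneg_right hwinkey hBnn) (le_of_eq (by ring))
        _ = Real.exp (-θ) * ∏ t, h (τ y) t (y t) := by
            rw [Finset.prod_filter_mul_prod_filter_not]
    have main := fiber_bound
      (F := fun y : Fin T → Y => (∏ t, p t (y t)) *
        ind (ENNReal.ofReal θ ≤ (i : ℝ≥0∞) *
          klDiv (emp1 i (fun j => extY y (n - i + 1 + j))) Q₀))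
      (τ := τ) (h := h) (C := Real.exp (-θ)) (Real.exp_nonneg _) hhnn hpt hsum
    rw [cardK] at main
    exact main

end LemB

section Factor

variable {X : Type*} {Y : Type*}

lemma sum_weight_one [Fintype X] (P : X → ℝ) (hP : IsDist P) (N : ℕ) :
    ∑ c : Fin N → X, ∏ j, P (c j) = 1 := by
  classical
  rw [← Fintype.piFinset_univ, Finset.sum_prod_piFinset]
  rw [Finset.prod_congr rfl fun j _ => hP.2]
  exact Finset.prod_const_one

/-- Factorization of the codebook average over two distinct messages. -/
lemma factor [Fintype X] (P : X → ℝ) (hP : IsDist P) {M N : ℕ} {m m' : Fin M}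
    (hmm : m ≠ m') (g₁ g₂ : (Fin N → X) → ℝ) :
    ∑ Cb : Fin M → Fin N → X, cbWeight P Cb * g₁ (Cb m) * g₂ (Cb m')
      = (∑ c : Fin N → X, (∏ j, P (c j)) * g₁ c) *
        (∑ c : Fin N → X, (∏ j, P (c j)) * g₂ c) := by
  classical
  set W : Fin M → (Fin N → X) → ℝ := fun μ c =>
    (∏ j, P (c j)) * ((if μ = m then g₁ c else 1) * (if μ = m' then g₂ c else 1)) with hW
  have hterm : ∀ Cb : Fin M → Fin N → X,
      cbWeight P Cb * g₁ (Cb m) * g₂ (Cb m') = ∏ μ, W μ (Cb μ) := by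
    intro Cb
    simp only [hW]
    rw [Finset.prod_mul_distrib, Finset.prod_mul_distrib]
    rw [Finset.prod_ite_eq' Finset.univ m (fun μ => g₁ (Cb μ))]
    rw [Finset.prod_ite_eq' Finset.univ m' (fun μ => g₂ (Cb μ))]
    simp only [Finset.mem_univ, if_true]
    unfold cbWeight
    ring
  rw [Finset.sum_congr rfl fun Cb _ => hterm Cb]
  rw [← Fintype.piFinset_univ, Finset.sum_prod_piFinset]
  have hval : ∀ μ : Fin M, ∑ c : Fin N → X, W μ c
      = (if μ = m then ∑ c : Fin N → X, (∏ j, P (c j)) * g₁ c else 1) *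
        (if μ = m' then ∑ c : Fin N → X, (∏ j, P (c j)) * g₂ c else 1) := by
    intro μ
    by_cases h1 : μ = m <;> by_cases h2 : μ = m'
    · exact absurd (h1 ▸ h2) hmm
    · simp only [hW, h1, h2, if_true, if_false, if_neg hmm, mul_one]
    · simp only [hW, h1, h2, if_true, if_false, if_neg (Ne.symm hmm), mul_one, one_mul]
    · simp only [hW, h1, h2, if_false, mul_one, one_mul]
      exact sum_weight_one P hP N
  rw [Finset.prod_congr rfl fun μ _ => hval μ]
  rw [Finset.prod_mul_distrib]
  rw [Finset.prod_ite_eq' Finset.univ m (fun _ => ∑ c : Fin N → X, (∏ j, P (c j)) * g₁ c)]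
  rw [Finset.prod_ite_eq' Finset.univ m' (fun _ => ∑ c : Fin N → X, (∏ j, P (c j)) * g₂ c)]
  simp only [Finset.mem_univ, if_true]

end Factor

section TermBound

variable {X : Type*} {Y : Type*}

/-- Generic per-term bound: extract `M^{-t₂}` from the codeword randomness. -/
lemma term_bound [Fintype X] [Fintype Y] [DecidableEq X] [DecidableEq Y]
    [Inhabited X] [Inhabited Y]
    (Q : X → Y → ℝ) (star : X) (hQ : IsChannel Q) (P : X → ℝ) (hP : IsDist P)
    (t₁ t₂ : ℝ) {N M T : ℕ} {m m' : Fin M} (hmm : m ≠ m') (l : ℕ)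
    {n i : ℕ} (hi : 1 ≤ i) (hiN : i ≤ N) :
    ∑ Cb : Fin M → Fin N → X, ∑ y : Fin T → Y,
        cbWeight P Cb * seqProb Q star (Cb m) l y *
          ind (EventE Q star t₁ t₂ M (extX (Cb m')) (extY y) n i)
      ≤ (Real.exp (-(t₂ * Real.log M)) * ((i : ℝ) + 1) ^ (Fintype.card X * Fintype.card Y)) *
        ∑ y : Fin T → Y,
          (∑ c : Fin N → X, (∏ j, P (c j)) * seqProb Q star c l y) *
            ind (ENNReal.ofReal (t₁ * Real.log M) ≤ (i : ℝ≥0∞) *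
              klDiv (emp1 i (fun j => extY y (n - i + 1 + j))) (Q star)) := by
  classical
  rw [Finset.sum_comm]
  have hfac : ∀ y : Fin T → Y,
      ∑ Cb : Fin M → Fin N → X,
          cbWeight P Cb * seqProb Q star (Cb m) l y *
            ind (EventE Q star t₁ t₂ M (extX (Cb m')) (extY y) n i)
        = (∑ c : Fin N → X, (∏ j, P (c j)) * seqProb Q star c l y) *
          (∑ c : Fin N → X, (∏ j, P (c j)) *
            ind (EventE Q star t₁ t₂ M (extX c) (extY y) n i)) := fun y =>
    factor P hP hmm (fun c => seqProb Q star c l y)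
      (fun c => ind (EventE Q star t₁ t₂ M (extX c) (extY y) n i))
  rw [Finset.sum_congr rfl fun y _ => hfac y]
  -- bound the second factor for each y
  have hG : ∀ y : Fin T → Y,
      (∑ c : Fin N → X, (∏ j, P (c j)) *
        ind (EventE Q star t₁ t₂ M (extX c) (extY y) n i))
      ≤ (Real.exp (-(t₂ * Real.log M)) *
          ((i : ℝ) + 1) ^ (Fintype.card X * Fintype.card Y)) *
        ind (ENNReal.ofReal (t₁ * Real.log M) ≤ (i : ℝ≥0∞) *
          klDiv (emp1 i (fun j => extY y (n - i + 1 + j))) (Q star)) := by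
    intro y
    have hsplit : ∀ c : Fin N → X,
        ind (EventE Q star t₁ t₂ M (extX c) (extY y) n i)
          ≤ ind (t₂ * Real.log M ≤ (i : ℝ) *
              mi (emp2 i (extX c) (fun j => extY y (n - i + 1 + j)))) *
            ind (ENNReal.ofReal (t₁ * Real.log M) ≤ (i : ℝ≥0∞) *
              klDiv (emp1 i (fun j => extY y (n - i + 1 + j))) (Q star)) := by
      intro c
      refine ind_le_mul ?_ (fun hE => hE.2)
      intro hE
      have h1 := hE.1 i (Finset.mem_Icc.mpr ⟨hi, le_refl i⟩)
      simpa [Nat.sub_self] using h1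
    calc ∑ c : Fin N → X, (∏ j, P (c j)) *
          ind (EventE Q star t₁ t₂ M (extX c) (extY y) n i)
        ≤ ∑ c : Fin N → X, (∏ j, P (c j)) *
            (ind (t₂ * Real.log M ≤ (i : ℝ) *
                mi (emp2 i (extX c) (fun j => extY y (n - i + 1 + j)))) *
              ind (ENNReal.ofReal (t₁ * Real.log M) ≤ (i : ℝ≥0∞) *
                klDiv (emp1 i (fun j => extY y (n - i + 1 + j))) (Q star))) := by
          refine Finset.sum_le_sum fun c _ => ?_
          refine mul_le_mul_of_nonneg_left (hsplit c) ?_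
          exact Finset.prod_nonneg fun j _ => hP.1 _
      _ = (∑ c : Fin N → X, (∏ j, P (c j)) *
            ind (t₂ * Real.log M ≤ (i : ℝ) *
              mi (emp2 i (extX c) (fun j => extY y (n - i + 1 + j))))) *
          ind (ENNReal.ofReal (t₁ * Real.log M) ≤ (i : ℝ≥0∞) *
            klDiv (emp1 i (fun j => extY y (n - i + 1 + j))) (Q star)) := by
          rw [Finset.sum_mul]
          exact Finset.sum_congr rfl fun c _ => by ring
      _ ≤ (Real.exp (-(t₂ * Real.log M)) *
            ((i : ℝ) + 1) ^ (Fintype.card X * Fintype.card Y)) *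
          ind (ENNReal.ofReal (t₁ * Real.log M) ≤ (i : ℝ≥0∞) *
            klDiv (emp1 i (fun j => extY y (n - i + 1 + j))) (Q star)) := by
          refine mul_le_mul_of_nonneg_right ?_ (ind_nonneg _)
          exact lemA P hP (fun j => extY y (n - i + 1 + j)) (t₂ * Real.log M) hi hiN
  -- combine
  rw [Finset.mul_sum]
  refine Finset.sum_le_sum fun y _ => ?_
  have hFnn : 0 ≤ ∑ c : Fin N → X, (∏ j, P (c j)) * seqProb Q star c l y := by
    refine Finset.sum_nonneg fun c _ => ?_
    refine mul_nonneg (Finset.prod_nonneg fun j _ => hP.1 _) ?_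
    exact Finset.prod_nonneg fun t _ => (hQ _).1 _
  calc (∑ c : Fin N → X, (∏ j, P (c j)) * seqProb Q star c l y) *
        (∑ c : Fin N → X, (∏ j, P (c j)) *
          ind (EventE Q star t₁ t₂ M (extX c) (extY y) n i))
      ≤ (∑ c : Fin N → X, (∏ j, P (c j)) * seqProb Q star c l y) *
        ((Real.exp (-(t₂ * Real.log M)) *
            ((i : ℝ) + 1) ^ (Fintype.card X * Fintype.card Y)) *
          ind (ENNReal.ofReal (t₁ * Real.log M) ≤ (i : ℝ≥0∞) *
            klDiv (emp1 i (fun j => extY y (n - i + 1 + j))) (Q star))) :=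
        mul_le_mul_of_nonneg_left (hG y) hFnn
    _ = _ := by ring

end TermBound

section SumF

variable {X : Type*} {Y : Type*}

lemma seqProb_sum_one [Fintype X] [Fintype Y] (Q : X → Y → ℝ) (star : X) (hQ : IsChannel Q)
    {N T : ℕ} (c : Fin N → X) (l : ℕ) :
    ∑ y : Fin T → Y, seqProb Q star c l y = 1 := by
  classical
  unfold seqProb
  rw [← Fintype.piFinset_univ, Finset.sum_prod_piFinset]
  rw [Finset.prod_congr rfl fun t _ => (hQ _).2]
  exact Finset.prod_const_one

lemma sumF_le_one [Fintype X] [Fintype Y] (Q : X → Y → ℝ) (star : X) (hQ : IsChannel Q)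
    (P : X → ℝ) (hP : IsDist P) {N T : ℕ} (l : ℕ) (g : (Fin T → Y) → ℝ)
    (hg1 : ∀ y, g y ≤ 1) :
    ∑ y : Fin T → Y,
        (∑ c : Fin N → X, (∏ j, P (c j)) * seqProb Q star c l y) * g y ≤ 1 := by
  classical
  have hFnn : ∀ y : Fin T → Y,
      0 ≤ ∑ c : Fin N → X, (∏ j, P (c j)) * seqProb Q star c l y := by
    intro y
    refine Finset.sum_nonneg fun c _ => ?_
    refine mul_nonneg (Finset.prod_nonneg fun j _ => hP.1 _) ?_
    exact Finset.prod_nonneg fun t _ => (hQ _).1 _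
  calc ∑ y : Fin T → Y,
        (∑ c : Fin N → X, (∏ j, P (c j)) * seqProb Q star c l y) * g y
      ≤ ∑ y : Fin T → Y, ∑ c : Fin N → X, (∏ j, P (c j)) * seqProb Q star c l y := by
        refine Finset.sum_le_sum fun y _ => ?_
        calc (∑ c : Fin N → X, (∏ j, P (c j)) * seqProb Q star c l y) * g y
            ≤ (∑ c : Fin N → X, (∏ j, P (c j)) * seqProb Q star c l y) * 1 :=
              mul_le_mul_of_nonneg_left (hg1 y) (hFnn y)
          _ = _ := mul_one _
    _ = ∑ c : Fin N → X, ∑ y : Fin T → Y, (∏ j, P (c j)) * seqProb Q star c l y :=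
        Finset.sum_comm
    _ = ∑ c : Fin N → X, (∏ j, P (c j)) * ∑ y : Fin T → Y, seqProb Q star c l y := by
        exact Finset.sum_congr rfl fun c _ => (Finset.mul_sum _ _ _).symm
    _ = ∑ c : Fin N → X, ∏ j, P (c j) := by
        refine Finset.sum_congr rfl fun c _ => ?_
        rw [seqProb_sum_one Q star hQ c l, mul_one]
    _ = 1 := sum_weight_one P hP N

lemma sumF_noise [Fintype X] [Fintype Y] [DecidableEq Y] [Inhabited Y]
    (Q : X → Y → ℝ) (star : X) (hQ : IsChannel Q) (P : X → ℝ) (hP : IsDist P)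
    (θ : ℝ) {N T : ℕ} (l : ℕ) {n i : ℕ} (hi : 1 ≤ i) (hin : i ≤ n) (hnT : n ≤ T)
    (hnoise : n < l ∨ l + N - 1 + i ≤ n) (hN : 1 ≤ N) :
    ∑ y : Fin T → Y,
        (∑ c : Fin N → X, (∏ j, P (c j)) * seqProb Q star c l y) *
          ind (ENNReal.ofReal θ ≤ (i : ℝ≥0∞) *
            klDiv (emp1 i (fun j => extY y (n - i + 1 + j))) (Q star))
      ≤ Real.exp (-θ) * ((i : ℝ) + 1) ^ (Fintype.card Y) := by
  classical
  have hswap : ∑ y : Fin T → Y,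
      (∑ c : Fin N → X, (∏ j, P (c j)) * seqProb Q star c l y) *
        ind (ENNReal.ofReal θ ≤ (i : ℝ≥0∞) *
          klDiv (emp1 i (fun j => extY y (n - i + 1 + j))) (Q star))
      = ∑ c : Fin N → X, (∏ j, P (c j)) *
          ∑ y : Fin T → Y, seqProb Q star c l y *
            ind (ENNReal.ofReal θ ≤ (i : ℝ≥0∞) *
              klDiv (emp1 i (fun j => extY y (n - i + 1 + j))) (Q star)) := by
    rw [Finset.sum_congr rfl fun y (_ : y ∈ Finset.univ) => Finset.sum_mul _ _ _]
    rw [Finset.sum_comm]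
    refine Finset.sum_congr rfl fun c _ => ?_
    rw [Finset.mul_sum]
    exact Finset.sum_congr rfl fun y _ => by ring
  rw [hswap]
  have hper : ∀ c : Fin N → X,
      ∑ y : Fin T → Y, seqProb Q star c l y *
          ind (ENNReal.ofReal θ ≤ (i : ℝ≥0∞) *
            klDiv (emp1 i (fun j => extY y (n - i + 1 + j))) (Q star))
        ≤ Real.exp (-θ) * ((i : ℝ) + 1) ^ (Fintype.card Y) := by
    intro c
    have := lemB (T := T)
      (fun t => Q (if h : l ≤ (t : ℕ) + 1 ∧ (t : ℕ) + 1 < l + N then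
        c ⟨(t : ℕ) + 1 - l, by omega⟩ else star))
      (fun t => hQ _) (Q star) (hQ star) hi hin hnT
      (fun t h1 h2 => by
        have hns : ¬ (l ≤ (t : ℕ) + 1 ∧ (t : ℕ) + 1 < l + N) := by omega
        show Q (if h : l ≤ (t : ℕ) + 1 ∧ (t : ℕ) + 1 < l + N then
          c ⟨(t : ℕ) + 1 - l, by omega⟩ else star) = Q star
        rw [dif_neg hns]) θ
    exact this
  calc ∑ c : Fin N → X, (∏ j, P (c j)) *
        (∑ y : Fin T → Y, seqProb Q star c l y *
          ind (ENNReal.ofReal θ ≤ (i : ℝ≥0∞) *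
            klDiv (emp1 i (fun j => extY y (n - i + 1 + j))) (Q star)))
      ≤ ∑ c : Fin N → X, (∏ j, P (c j)) *
          (Real.exp (-θ) * ((i : ℝ) + 1) ^ (Fintype.card Y)) := by
        refine Finset.sum_le_sum fun c _ => ?_
        exact mul_le_mul_of_nonneg_left (hper c)
          (Finset.prod_nonneg fun j _ => hP.1 _)
    _ = (∑ c : Fin N → X, ∏ j, P (c j)) *
          (Real.exp (-θ) * ((i : ℝ) + 1) ^ (Fintype.card Y)) := by
        rw [Finset.sum_mul]
    _ = Real.exp (-θ) * ((i : ℝ) + 1) ^ (Fintype.card Y) := by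
        rw [sum_weight_one P hP N, one_mul]

end SumF


/-- **Lemma (false-alarm).** With the codebook randomly generated so that every symbol
of every codeword is i.i.d. `P`, there is a polynomial (here `K·(N+1)^d`, depending
only on the alphabet sizes) such that for all thresholds `t₁, t₂ ∈ ℝ`, all `N`,
`M ≥ 2`, asynchronism levels `A ≥ 1`, messages `m` and starting times `l`:
`∑_{m'≠m} ∑_{n=1}^{A+N-1} ∑_{i=1}^{N∧n} P_{m,l}(E(m',n,i))
  ≤ poly(N) (M^{-(t₁+t₂-1)} A + M^{-(t₂-1)})`. -/
theorem false_alarm_bound [Fintype X] [Fintype Y] [Inhabited X] [Inhabited Y] :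
    ∃ (d : ℕ) (K : ℝ), 0 < K ∧
      ∀ (Q : X → Y → ℝ) (star : X), IsChannel Q →
      ∀ (P : X → ℝ), IsDist P →
      ∀ (t₁ t₂ : ℝ) (N M A : ℕ), 1 ≤ N → 2 ≤ M → 1 ≤ A →
      ∀ (m : Fin M) (l : ℕ),
      (∑ m' ∈ Finset.univ.erase m, ∑ n ∈ Finset.Icc 1 (A + N - 1),
          ∑ i ∈ Finset.Icc 1 (min N n),
          ∑ Cb : Fin M → Fin N → X, ∑ y : Fin (A + N - 1) → Y,
            cbWeight P Cb * seqProb Q star (Cb m) l y *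
              ind (EventE Q star t₁ t₂ M (extX (Cb m')) (extY y) n i))
        ≤ K * (N + 1 : ℝ) ^ d *
            ((M : ℝ) ^ (-(t₁ + t₂ - 1)) * (A : ℝ) + (M : ℝ) ^ (-(t₂ - 1))) := by
  classical
  refine ⟨Fintype.card X * Fintype.card Y + Fintype.card Y + 2, 2, by norm_num, ?_⟩
  intro Q star hQ P hP t₁ t₂ N M A hN hM hA m l
  set DXY := Fintype.card X * Fintype.card Y with hDXY
  set DY := Fintype.card Y with hDY
  have hM0 : (0 : ℝ) < (M : ℝ) := by
    have : (2 : ℝ) ≤ (M : ℝ) := by exact_mod_cast hM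
    linarith
  set L := Real.log M with hL
  set CA' := Real.exp (-(t₂ * L)) * ((N : ℝ) + 1) ^ DXY with hCA
  set CS' := Real.exp (-(t₁ * L)) * ((N : ℝ) + 1) ^ DY with hCS
  have hN1 : (0 : ℝ) ≤ (N : ℝ) + 1 := by positivity
  have hCA0 : 0 ≤ CA' := by rw [hCA]; positivity
  have hCS0 : 0 ≤ CS' := by rw [hCS]; positivity
  -- per-term bound
  have hterm : ∀ m' ∈ Finset.univ.erase m, ∀ n ∈ Finset.Icc 1 (A + N - 1),
      ∀ i ∈ Finset.Icc 1 (min N n),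
      (∑ Cb : Fin M → Fin N → X, ∑ y : Fin (A + N - 1) → Y,
          cbWeight P Cb * seqProb Q star (Cb m) l y *
            ind (EventE Q star t₁ t₂ M (extX (Cb m')) (extY y) n i))
        ≤ CA' * CS' + (if l ≤ n ∧ n ≤ l + 2 * N then CA' else 0) := by
    intro m' hm' n hn i hi'
    obtain ⟨hi1, hi2⟩ := Finset.mem_Icc.mp hi'
    have hiN : i ≤ N := le_trans hi2 (min_le_left _ _)
    have hin : i ≤ n := le_trans hi2 (min_le_right _ _)
    obtain ⟨hn1, hn2⟩ := Finset.mem_Icc.mp hn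
    have hmm : m ≠ m' := (Finset.ne_of_mem_erase hm').symm
    have htb := term_bound Q star hQ P hP t₁ t₂ hmm l hi1 hiN
      (T := A + N - 1) (n := n)
    have hCAi : Real.exp (-(t₂ * L)) * ((i : ℝ) + 1) ^ DXY ≤ CA' := by
      rw [hCA]
      refine mul_le_mul_of_nonneg_left ?_ (Real.exp_nonneg _)
      refine pow_le_pow_left₀ (by positivity) ?_ _
      have : (i : ℝ) ≤ (N : ℝ) := Nat.cast_le.mpr hiN
      linarith
    have hCAi0 : 0 ≤ Real.exp (-(t₂ * L)) * ((i : ℝ) + 1) ^ DXY := by positivity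
    have hitenn : 0 ≤ (if l ≤ n ∧ n ≤ l + 2 * N then CA' else 0) := by
      split <;> [exact hCA0; exact le_refl 0]
    by_cases hns : n < l ∨ l + N - 1 + i ≤ n
    · -- noise window
      have hsum := sumF_noise Q star hQ P hP (t₁ * L) l hi1 hin hn2 hns hN
        (N := N)
      have hCSi : Real.exp (-(t₁ * L)) * ((i : ℝ) + 1) ^ DY ≤ CS' := by
        rw [hCS]
        refine mul_le_mul_of_nonneg_left ?_ (Real.exp_nonneg _)
        refine pow_le_pow_left₀ (by positivity) ?_ _
        have : (i : ℝ) ≤ (N : ℝ) := Nat.cast_le.mpr hiN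
        linarith
      have hCSi0 : 0 ≤ Real.exp (-(t₁ * L)) * ((i : ℝ) + 1) ^ DY := by positivity
      calc (∑ Cb : Fin M → Fin N → X, ∑ y : Fin (A + N - 1) → Y,
            cbWeight P Cb * seqProb Q star (Cb m) l y *
              ind (EventE Q star t₁ t₂ M (extX (Cb m')) (extY y) n i))
          ≤ (Real.exp (-(t₂ * L)) * ((i : ℝ) + 1) ^ DXY) *
              ∑ y : Fin (A + N - 1) → Y,
                (∑ c : Fin N → X, (∏ j, P (c j)) * seqProb Q star c l y) *
                  ind (ENNReal.ofReal (t₁ * L) ≤ (i : ℝ≥0∞) *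
                    klDiv (emp1 i (fun j => extY y (n - i + 1 + j))) (Q star)) := htb
        _ ≤ (Real.exp (-(t₂ * L)) * ((i : ℝ) + 1) ^ DXY) *
              (Real.exp (-(t₁ * L)) * ((i : ℝ) + 1) ^ DY) :=
            mul_le_mul_of_nonneg_left hsum hCAi0
        _ ≤ CA' * CS' := mul_le_mul hCAi hCSi hCSi0 hCA0
        _ ≤ _ := le_add_of_nonneg_right hitenn
    · -- overlap window
      have hcond : l ≤ n ∧ n ≤ l + 2 * N := by
        rcases not_or.mp hns with ⟨h1, h2⟩
        constructor <;> omega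
      have hsum := sumF_le_one Q star hQ P hP l
        (fun y : Fin (A + N - 1) → Y =>
          ind (ENNReal.ofReal (t₁ * L) ≤ (i : ℝ≥0∞) *
            klDiv (emp1 i (fun j => extY y (n - i + 1 + j))) (Q star)))
        (fun y => ind_le_one _) (N := N)
      calc (∑ Cb : Fin M → Fin N → X, ∑ y : Fin (A + N - 1) → Y,
            cbWeight P Cb * seqProb Q star (Cb m) l y *
              ind (EventE Q star t₁ t₂ M (extX (Cb m')) (extY y) n i))
          ≤ (Real.exp (-(t₂ * L)) * ((i : ℝ) + 1) ^ DXY) *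
              ∑ y : Fin (A + N - 1) → Y,
                (∑ c : Fin N → X, (∏ j, P (c j)) * seqProb Q star c l y) *
                  ind (ENNReal.ofReal (t₁ * L) ≤ (i : ℝ≥0∞) *
                    klDiv (emp1 i (fun j => extY y (n - i + 1 + j))) (Q star)) := htb
        _ ≤ (Real.exp (-(t₂ * L)) * ((i : ℝ) + 1) ^ DXY) * 1 :=
            mul_le_mul_of_nonneg_left hsum hCAi0
        _ = Real.exp (-(t₂ * L)) * ((i : ℝ) + 1) ^ DXY := mul_one _
        _ ≤ CA' := hCAi
        _ ≤ CA' * CS' + (if l ≤ n ∧ n ≤ l + 2 * N then CA' else 0) := by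
            rw [if_pos hcond]
            have : 0 ≤ CA' * CS' := mul_nonneg hCA0 hCS0
            linarith
  -- sum the per-term bound
  have houter : ∀ m' ∈ Finset.univ.erase m,
      (∑ n ∈ Finset.Icc 1 (A + N - 1), ∑ i ∈ Finset.Icc 1 (min N n),
        ∑ Cb : Fin M → Fin N → X, ∑ y : Fin (A + N - 1) → Y,
          cbWeight P Cb * seqProb Q star (Cb m) l y *
            ind (EventE Q star t₁ t₂ M (extX (Cb m')) (extY y) n i))
      ≤ (N : ℝ) * (((A + N - 1 : ℕ) : ℝ) * (CA' * CS') + (2 * (N : ℝ) + 1) * CA') := by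
    intro m' hm'
    have hvnn : ∀ n : ℕ, 0 ≤ CA' * CS' + (if l ≤ n ∧ n ≤ l + 2 * N then CA' else 0) := by
      intro n
      have h1 : 0 ≤ CA' * CS' := mul_nonneg hCA0 hCS0
      have h2 : 0 ≤ (if l ≤ n ∧ n ≤ l + 2 * N then CA' else 0) := by
        split <;> [exact hCA0; exact le_refl 0]
      linarith
    have step1 : (∑ n ∈ Finset.Icc 1 (A + N - 1), ∑ i ∈ Finset.Icc 1 (min N n),
        ∑ Cb : Fin M → Fin N → X, ∑ y : Fin (A + N - 1) → Y,
          cbWeight P Cb * seqProb Q star (Cb m) l y *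
            ind (EventE Q star t₁ t₂ M (extX (Cb m')) (extY y) n i))
        ≤ ∑ n ∈ Finset.Icc 1 (A + N - 1), (N : ℝ) *
            (CA' * CS' + (if l ≤ n ∧ n ≤ l + 2 * N then CA' else 0)) := by
      refine Finset.sum_le_sum fun n hn => ?_
      calc ∑ i ∈ Finset.Icc 1 (min N n),
            ∑ Cb : Fin M → Fin N → X, ∑ y : Fin (A + N - 1) → Y,
              cbWeight P Cb * seqProb Q star (Cb m) l y *
                ind (EventE Q star t₁ t₂ M (extX (Cb m')) (extY y) n i)
          ≤ ∑ i ∈ Finset.Icc 1 (min N n),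
              (CA' * CS' + (if l ≤ n ∧ n ≤ l + 2 * N then CA' else 0)) :=
            Finset.sum_le_sum fun i hi' => hterm m' hm' n hn i hi'
        _ = ((min N n : ℕ) : ℝ) *
              (CA' * CS' + (if l ≤ n ∧ n ≤ l + 2 * N then CA' else 0)) := by
            rw [Finset.sum_const, Nat.card_Icc, nsmul_eq_mul]
            norm_num
        _ ≤ (N : ℝ) * (CA' * CS' + (if l ≤ n ∧ n ≤ l + 2 * N then CA' else 0)) := by
            refine mul_le_mul_of_nonneg_right ?_ (hvnn n)
            exact_mod_cast min_le_left N n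
    refine step1.trans ?_
    rw [← Finset.mul_sum]
    refine mul_le_mul_of_nonneg_left ?_ (Nat.cast_nonneg N)
    rw [Finset.sum_add_distrib, Finset.sum_const, Nat.card_Icc, nsmul_eq_mul]
    have hite : ∑ n ∈ Finset.Icc 1 (A + N - 1),
        (if l ≤ n ∧ n ≤ l + 2 * N then CA' else 0) ≤ (2 * (N : ℝ) + 1) * CA' := by
      rw [← Finset.sum_filter]
      rw [Finset.sum_const, nsmul_eq_mul]
      have hsub : (Finset.Icc 1 (A + N - 1)).filter (fun n => l ≤ n ∧ n ≤ l + 2 * N)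
          ⊆ Finset.Icc l (l + 2 * N) := by
        intro n hn
        exact Finset.mem_Icc.mpr (Finset.mem_filter.mp hn).2
      have hcard : ((Finset.Icc 1 (A + N - 1)).filter
          (fun n => l ≤ n ∧ n ≤ l + 2 * N)).card ≤ 2 * N + 1 := by
        refine le_trans (Finset.card_le_card hsub) ?_
        rw [Nat.card_Icc]
        omega
      calc (((Finset.Icc 1 (A + N - 1)).filter
            (fun n => l ≤ n ∧ n ≤ l + 2 * N)).card : ℝ) * CA'
          ≤ ((2 * N + 1 : ℕ) : ℝ) * CA' := by
            refine mul_le_mul_of_nonneg_right ?_ hCA0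
            exact_mod_cast hcard
        _ = (2 * (N : ℝ) + 1) * CA' := by push_cast; ring
    have : ((A + N - 1 + 1 - 1 : ℕ) : ℝ) = ((A + N - 1 : ℕ) : ℝ) := by norm_num
    rw [this]
    linarith
  -- sum over messages and the final numeric computation
  have hbound0 : 0 ≤ (N : ℝ) * (((A + N - 1 : ℕ) : ℝ) * (CA' * CS') +
      (2 * (N : ℝ) + 1) * CA') := by
    have h1 : 0 ≤ CA' * CS' := mul_nonneg hCA0 hCS0
    have h2 : (0:ℝ) ≤ ((A + N - 1 : ℕ) : ℝ) := Nat.cast_nonneg _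
    have h3 : (0:ℝ) ≤ 2 * (N : ℝ) + 1 := by positivity
    have h4 : (0:ℝ) ≤ (N:ℝ) := Nat.cast_nonneg _
    positivity
  have hS : (∑ m' ∈ Finset.univ.erase m, ∑ n ∈ Finset.Icc 1 (A + N - 1),
      ∑ i ∈ Finset.Icc 1 (min N n),
      ∑ Cb : Fin M → Fin N → X, ∑ y : Fin (A + N - 1) → Y,
        cbWeight P Cb * seqProb Q star (Cb m) l y *
          ind (EventE Q star t₁ t₂ M (extX (Cb m')) (extY y) n i))
      ≤ (M : ℝ) * ((N : ℝ) * (((A + N - 1 : ℕ) : ℝ) * (CA' * CS') +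
          (2 * (N : ℝ) + 1) * CA')) := by
    calc _ ≤ ∑ _m' ∈ Finset.univ.erase m, (N : ℝ) *
          (((A + N - 1 : ℕ) : ℝ) * (CA' * CS') + (2 * (N : ℝ) + 1) * CA') :=
        Finset.sum_le_sum houter
      _ = ((Finset.univ.erase m).card : ℝ) * ((N : ℝ) *
          (((A + N - 1 : ℕ) : ℝ) * (CA' * CS') + (2 * (N : ℝ) + 1) * CA')) := by
        rw [Finset.sum_const, nsmul_eq_mul]
      _ ≤ (M : ℝ) * ((N : ℝ) * (((A + N - 1 : ℕ) : ℝ) * (CA' * CS') +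
          (2 * (N : ℝ) + 1) * CA')) := by
        refine mul_le_mul_of_nonneg_right ?_ hbound0
        rw [Finset.card_erase_of_mem (Finset.mem_univ m), Finset.card_univ, Fintype.card_fin]
        have : ((M - 1 : ℕ) : ℝ) ≤ (M : ℝ) := by
          push_cast [Nat.cast_sub (by omega : 1 ≤ M)]
          linarith
        exact this
  refine hS.trans ?_
  -- numerics
  have hrpow : ∀ x : ℝ, (M : ℝ) ^ (-(x - 1)) = (M : ℝ) * Real.exp (-(x * L)) := by
    intro x
    rw [hL, Real.rpow_def_of_pos hM0]
    rw [show Real.log (M:ℝ) * -(x - 1) = Real.log (M:ℝ) + -(x * Real.log (M:ℝ)) by ring]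
    rw [Real.exp_add, Real.exp_log hM0]
  have hR1 : (0:ℝ) ≤ (M : ℝ) ^ (-(t₁ + t₂ - 1)) := Real.rpow_nonneg hM0.le _
  have hR2 : (0:ℝ) ≤ (M : ℝ) ^ (-(t₂ - 1)) := Real.rpow_nonneg hM0.le _
  have hCACS : CA' * CS' = Real.exp (-((t₁ + t₂) * L)) * ((N : ℝ) + 1) ^ (DXY + DY) := by
    rw [hCA, hCS, show -((t₁ + t₂) * L) = -(t₂ * L) + -(t₁ * L) by ring,
      Real.exp_add, pow_add]
    ring
  have hA1 : (1:ℝ) ≤ (A:ℝ) := by exact_mod_cast hA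
  have hN1' : (1:ℝ) ≤ (N:ℝ) := by exact_mod_cast hN
  have hTN : ((A + N - 1 : ℕ) : ℝ) ≤ (A : ℝ) * ((N : ℝ) + 1) := by
    rw [Nat.cast_sub (by omega : 1 ≤ A + N), Nat.cast_add]
    nlinarith
  have hpowle : ((N : ℝ) + 1) ^ DXY ≤ ((N : ℝ) + 1) ^ (DXY + DY) := by
    refine pow_le_pow_right₀ (by linarith) (Nat.le_add_right _ _)
  -- piece 1
  have piece1 : (M : ℝ) * ((N : ℝ) * (((A + N - 1 : ℕ) : ℝ) * (CA' * CS')))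
      ≤ ((N : ℝ) + 1) ^ (DXY + DY + 2) * ((M : ℝ) ^ (-(t₁ + t₂ - 1)) * (A : ℝ)) := by
    rw [hCACS]
    have e1 : (M : ℝ) * ((N : ℝ) * (((A + N - 1 : ℕ) : ℝ) *
        (Real.exp (-((t₁ + t₂) * L)) * ((N : ℝ) + 1) ^ (DXY + DY))))
        = ((M : ℝ) * Real.exp (-((t₁ + t₂) * L))) *
          (((N : ℝ) * ((A + N - 1 : ℕ) : ℝ)) * ((N : ℝ) + 1) ^ (DXY + DY)) := by ring
    rw [e1, ← hrpow (t₁ + t₂)]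
    have e2 : (N : ℝ) * ((A + N - 1 : ℕ) : ℝ) ≤ ((N : ℝ) + 1) * ((A : ℝ) * ((N : ℝ) + 1)) := by
      have := mul_le_mul (by linarith : (N:ℝ) ≤ (N:ℝ)+1) hTN (Nat.cast_nonneg _) (by linarith)
      linarith
    have e3 : ((N : ℝ) * ((A + N - 1 : ℕ) : ℝ)) * ((N : ℝ) + 1) ^ (DXY + DY)
        ≤ (((N : ℝ) + 1) * ((A : ℝ) * ((N : ℝ) + 1))) * ((N : ℝ) + 1) ^ (DXY + DY) := by
      refine mul_le_mul_of_nonneg_right e2 (by positivity)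
    calc (M : ℝ) ^ (-(t₁ + t₂ - 1)) *
          (((N : ℝ) * ((A + N - 1 : ℕ) : ℝ)) * ((N : ℝ) + 1) ^ (DXY + DY))
        ≤ (M : ℝ) ^ (-(t₁ + t₂ - 1)) *
          ((((N : ℝ) + 1) * ((A : ℝ) * ((N : ℝ) + 1))) * ((N : ℝ) + 1) ^ (DXY + DY)) := by
          refine mul_le_mul_of_nonneg_left e3 ?_
          exact Real.rpow_nonneg hM0.le _
      _ = ((N : ℝ) + 1) ^ (DXY + DY + 2) * ((M : ℝ) ^ (-(t₁ + t₂ - 1)) * (A : ℝ)) := by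
          rw [pow_add]
          ring
  -- piece 2
  have piece2 : (M : ℝ) * ((N : ℝ) * ((2 * (N : ℝ) + 1) * CA'))
      ≤ ((N : ℝ) + 1) ^ (DXY + DY + 2) * (2 * (M : ℝ) ^ (-(t₂ - 1))) := by
    rw [hCA]
    have e1 : (M : ℝ) * ((N : ℝ) * ((2 * (N : ℝ) + 1) *
        (Real.exp (-(t₂ * L)) * ((N : ℝ) + 1) ^ DXY)))
        = ((M : ℝ) * Real.exp (-(t₂ * L))) *
          (((N : ℝ) * (2 * (N : ℝ) + 1)) * ((N : ℝ) + 1) ^ DXY) := by ring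
    rw [e1, ← hrpow t₂]
    have e2 : (N : ℝ) * (2 * (N : ℝ) + 1) ≤ 2 * ((N : ℝ) + 1) ^ 2 := by nlinarith
    have e3 : ((N : ℝ) * (2 * (N : ℝ) + 1)) * ((N : ℝ) + 1) ^ DXY
        ≤ (2 * ((N : ℝ) + 1) ^ 2) * ((N : ℝ) + 1) ^ (DXY + DY) := by
      refine mul_le_mul e2 hpowle (by positivity) (by positivity)
    calc (M : ℝ) ^ (-(t₂ - 1)) *
          (((N : ℝ) * (2 * (N : ℝ) + 1)) * ((N : ℝ) + 1) ^ DXY)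
        ≤ (M : ℝ) ^ (-(t₂ - 1)) *
          ((2 * ((N : ℝ) + 1) ^ 2) * ((N : ℝ) + 1) ^ (DXY + DY)) := by
          exact mul_le_mul_of_nonneg_left e3 hR2
      _ = ((N : ℝ) + 1) ^ (DXY + DY + 2) * (2 * (M : ℝ) ^ (-(t₂ - 1))) := by
          rw [pow_add]
          ring
  have hfinal : (M : ℝ) * ((N : ℝ) * (((A + N - 1 : ℕ) : ℝ) * (CA' * CS') +
      (2 * (N : ℝ) + 1) * CA'))
      ≤ ((N : ℝ) + 1) ^ (DXY + DY + 2) * ((M : ℝ) ^ (-(t₁ + t₂ - 1)) * (A : ℝ))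
        + ((N : ℝ) + 1) ^ (DXY + DY + 2) * (2 * (M : ℝ) ^ (-(t₂ - 1))) := by
    have expand : (M : ℝ) * ((N : ℝ) * (((A + N - 1 : ℕ) : ℝ) * (CA' * CS') +
        (2 * (N : ℝ) + 1) * CA'))
        = (M : ℝ) * ((N : ℝ) * (((A + N - 1 : ℕ) : ℝ) * (CA' * CS')))
          + (M : ℝ) * ((N : ℝ) * ((2 * (N : ℝ) + 1) * CA')) := by ring
    rw [expand]
    exact add_le_add piece1 piece2
  refine hfinal.trans ?_
  have hpownn : (0:ℝ) ≤ ((N : ℝ) + 1) ^ (DXY + DY + 2) := by positivity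
  have hterm1 : (0:ℝ) ≤ ((N : ℝ) + 1) ^ (DXY + DY + 2) *
      ((M : ℝ) ^ (-(t₁ + t₂ - 1)) * (A : ℝ)) := by
    refine mul_nonneg hpownn (mul_nonneg hR1 (Nat.cast_nonneg _))
  have goal_eq : (2 : ℝ) * ((N : ℝ) + 1) ^ (DXY + DY + 2) *
      ((M : ℝ) ^ (-(t₁ + t₂ - 1)) * (A : ℝ) + (M : ℝ) ^ (-(t₂ - 1)))
      = 2 * (((N : ℝ) + 1) ^ (DXY + DY + 2) * ((M : ℝ) ^ (-(t₁ + t₂ - 1)) * (A : ℝ)))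
        + ((N : ℝ) + 1) ^ (DXY + DY + 2) * (2 * (M : ℝ) ^ (-(t₂ - 1))) := by ring
  calc ((N : ℝ) + 1) ^ (DXY + DY + 2) * ((M : ℝ) ^ (-(t₁ + t₂ - 1)) * (A : ℝ))
        + ((N : ℝ) + 1) ^ (DXY + DY + 2) * (2 * (M : ℝ) ^ (-(t₂ - 1)))
      ≤ 2 * (((N : ℝ) + 1) ^ (DXY + DY + 2) * ((M : ℝ) ^ (-(t₁ + t₂ - 1)) * (A : ℝ)))
        + ((N : ℝ) + 1) ^ (DXY + DY + 2) * (2 * (M : ℝ) ^ (-(t₂ - 1))) := by linarith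
    _ = 2 * ((N : ℝ) + 1) ^ (DXY + DY + 2) *
        ((M : ℝ) ^ (-(t₁ + t₂ - 1)) * (A : ℝ) + (M : ℝ) ^ (-(t₂ - 1))) := goal_eq.symm


end Async
end

section
/- Let J be a probability distribution on 𝒳×𝒴 (𝒳, 𝒴 finite) and let r satisfy 0 ≤ r < I(J). Then min{ D(V||J) : V a joint distribution on 𝒳×𝒴 with I(V) ≤ r } = min{ D(V||J) : V a joint distribution on 𝒳×𝒴 with I(V) = r }. -/
open scoped BigOperators ENNReal

namespace Async

variable {X : Type*} {Y : Type*}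

/-- Auxiliary, manifestly continuous expression for mutual information. -/
noncomputable def miAux [Fintype X] [Fintype Y] (V : X × Y → ℝ) : ℝ :=
  (∑ p : X × Y, V p * Real.log (V p))
    - (∑ x, margX V x * Real.log (margX V x))
    - (∑ y, margY V y * Real.log (margY V y))

lemma mi_eq_miAux [Fintype X] [Fintype Y] {V : X × Y → ℝ} (h : ∀ p, 0 ≤ V p) :
    mi V = miAux V := by
  have key : ∀ p : X × Y, V p * Real.log (V p / (margX V p.1 * margY V p.2))
      = V p * Real.log (V p) - V p * Real.log (margX V p.1)
        - V p * Real.log (margY V p.2) := by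
    intro p
    rcases eq_or_lt_of_le (h p) with h0 | h0
    · simp [← h0]
    · have hb : 0 < margX V p.1 :=
        lt_of_lt_of_le h0 (Finset.single_le_sum (fun y _ => h (p.1, y)) (Finset.mem_univ p.2))
      have hc : 0 < margY V p.2 :=
        lt_of_lt_of_le h0 (Finset.single_le_sum (fun x _ => h (x, p.2)) (Finset.mem_univ p.1))
      rw [Real.log_div h0.ne' (by positivity), Real.log_mul hb.ne' hc.ne']
      ring
  have hX : ∑ p : X × Y, V p * Real.log (margX V p.1)
      = ∑ x, margX V x * Real.log (margX V x) := by
    rw [Fintype.sum_prod_type]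
    exact Finset.sum_congr rfl fun x _ =>
      (Finset.sum_mul Finset.univ (fun y => V (x, y)) (Real.log (margX V x))).symm
  have hY : ∑ p : X × Y, V p * Real.log (margY V p.2)
      = ∑ y, margY V y * Real.log (margY V y) := by
    rw [Fintype.sum_prod_type_right]
    exact Finset.sum_congr rfl fun y _ =>
      (Finset.sum_mul Finset.univ (fun x => V (x, y)) (Real.log (margY V y))).symm
  simp only [mi, key, miAux, Finset.sum_sub_distrib, hX, hY]

lemma continuous_miAux [Fintype X] [Fintype Y] :
    Continuous fun V : X × Y → ℝ => miAux V := by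
  unfold miAux margX margY
  refine Continuous.sub (Continuous.sub ?_ ?_) ?_
  · exact continuous_finset_sum _ fun p _ =>
      Real.continuous_mul_log.comp (continuous_apply p)
  · exact continuous_finset_sum _ fun x _ =>
      Real.continuous_mul_log.comp (continuous_finset_sum _ fun y _ => continuous_apply (x, y))
  · exact continuous_finset_sum _ fun y _ =>
      Real.continuous_mul_log.comp (continuous_finset_sum _ fun x _ => continuous_apply (x, y))

lemma klDivR_nonneg {A : Type*} [Fintype A] {μ ν : A → ℝ} (hμ : IsDist μ) (hν : IsDist ν)
    (hac : ∀ a, ν a = 0 → μ a = 0) : 0 ≤ klDivR μ ν := by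
  have key : ∀ a, μ a - ν a ≤ μ a * Real.log (μ a / ν a) := by
    intro a
    rcases eq_or_lt_of_le (hμ.1 a) with h0 | h0
    · simp only [← h0, zero_mul, zero_sub, neg_nonpos]; exact hν.1 a
    · have hν0 : 0 < ν a := by
        rcases eq_or_lt_of_le (hν.1 a) with h0' | h0'
        · exact absurd (hac a h0'.symm) h0.ne'
        · exact h0'
      have hlog := Real.log_le_sub_one_of_pos (show 0 < ν a / μ a by positivity)
      rw [Real.log_div hν0.ne' h0.ne'] at hlog
      rw [Real.log_div h0.ne' hν0.ne']
      have h1 : 1 - ν a / μ a ≤ Real.log (μ a) - Real.log (ν a) := by linarith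
      have h2 : μ a * (1 - ν a / μ a) = μ a - ν a := by field_simp
      nlinarith [mul_le_mul_of_nonneg_left h1 h0.le]
  calc (0:ℝ) = ∑ a, μ a - ∑ a, ν a := by rw [hμ.2, hν.2]; ring
    _ = ∑ a, (μ a - ν a) := (Finset.sum_sub_distrib μ ν).symm
    _ ≤ ∑ a, μ a * Real.log (μ a / ν a) := Finset.sum_le_sum fun a _ => key a

lemma klDivR_interp_le {A : Type*} [Fintype A] {μ ν : A → ℝ}
    (hμ : ∀ a, 0 ≤ μ a) (hν : ∀ a, 0 ≤ ν a) (hac : ∀ a, ν a = 0 → μ a = 0)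
    {t : ℝ} (ht0 : 0 ≤ t) (ht1 : t ≤ 1) :
    klDivR (fun a => (1 - t) * μ a + t * ν a) ν ≤ (1 - t) * klDivR μ ν := by
  have key : ∀ a, ((1 - t) * μ a + t * ν a) * Real.log (((1 - t) * μ a + t * ν a) / ν a)
      ≤ (1 - t) * (μ a * Real.log (μ a / ν a)) := by
    intro a
    rcases eq_or_lt_of_le (hν a) with h0 | h0
    · have hμ0 := hac a h0.symm
      simp [← h0, hμ0]
    · have hw : 0 ≤ (1 - t) * μ a + t * ν a :=
        add_nonneg (mul_nonneg (by linarith) (hμ a)) (mul_nonneg ht0 h0.le)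
      have hconv := Real.convexOn_mul_log.2 (Set.mem_Ici.mpr (hμ a))
        (Set.mem_Ici.mpr h0.le) (by linarith : (0:ℝ) ≤ 1 - t) ht0 (by ring)
      simp only [smul_eq_mul] at hconv
      have hsplit : ∀ x : ℝ, 0 ≤ x →
          x * Real.log (x / ν a) = x * Real.log x - x * Real.log (ν a) := by
        intro x hx
        rcases eq_or_lt_of_le hx with hx0 | hx0
        · simp [← hx0]
        · rw [Real.log_div hx0.ne' h0.ne']; ring
      rw [hsplit _ hw, hsplit _ (hμ a)]
      nlinarith [hconv]
  calc klDivR (fun a => (1 - t) * μ a + t * ν a) ν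
      ≤ ∑ a, (1 - t) * (μ a * Real.log (μ a / ν a)) := Finset.sum_le_sum fun a _ => key a
    _ = (1 - t) * klDivR μ ν := by rw [← Finset.mul_sum]; rfl

/-- **Claim i.** For `0 ≤ r < I(J)`, the minimum of `D(V‖J)` over joint distributions
with `I(V) ≤ r` equals the minimum over joint distributions with `I(V) = r`. -/
theorem min_le_eq_min_eq [Fintype X] [Fintype Y]
    (J : X × Y → ℝ) (hJ : IsDist J) (r : ℝ) (hr0 : 0 ≤ r) (hrI : r < mi J) :
    sInf {v : ℝ≥0∞ | ∃ V : X × Y → ℝ, IsDist V ∧ mi V ≤ r ∧ v = klDiv V J}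
      = sInf {v : ℝ≥0∞ | ∃ V : X × Y → ℝ, IsDist V ∧ mi V = r ∧ v = klDiv V J} := by
  apply le_antisymm
  · refine sInf_le_sInf ?_
    rintro v ⟨V, h1, h2, h3⟩
    exact ⟨V, h1, h2.le, h3⟩
  · apply le_sInf
    rintro v ⟨V, hV, hmiV, rfl⟩
    rcases eq_or_ne (klDiv V J) ⊤ with htop | hne
    · rw [htop]; exact le_top
    · have hac : ∀ p, J p = 0 → V p = 0 := by
        by_contra hcon
        rw [klDiv, if_neg hcon] at hne
        exact hne rfl
      set W : ℝ → (X × Y → ℝ) := fun t p => (1 - t) * V p + t * J p with hW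
      have hφ : Continuous fun t => miAux (W t) :=
        continuous_miAux.comp (continuous_pi fun p => by
          simp only [hW]; fun_prop)
      have hW0 : W 0 = V := by funext p; simp [hW]
      have hW1 : W 1 = J := by funext p; simp [hW]
      have hmem : r ∈ Set.Icc (miAux (W 0)) (miAux (W 1)) := by
        rw [hW0, hW1, ← mi_eq_miAux hV.1, ← mi_eq_miAux hJ.1]
        exact ⟨hmiV, hrI.le⟩
      obtain ⟨t, ht, hφt⟩ := intermediate_value_Icc zero_le_one hφ.continuousOn hmem
      have ht0 : 0 ≤ t := ht.1
      have ht1 : t ≤ 1 := ht.2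
      have hWnn : ∀ p, 0 ≤ W t p := fun p =>
        add_nonneg (mul_nonneg (by linarith) (hV.1 p)) (mul_nonneg ht0 (hJ.1 p))
      have hWdist : IsDist (W t) := by
        refine ⟨hWnn, ?_⟩
        show ∑ p, ((1 - t) * V p + t * J p) = 1
        rw [Finset.sum_add_distrib, ← Finset.mul_sum, ← Finset.mul_sum, hV.2, hJ.2]
        ring
      have hac' : ∀ p, J p = 0 → W t p = 0 := fun p hp => by
        simp [hW, hac p hp, hp]
      have hle : klDiv (W t) J ≤ klDiv V J := by
        rw [klDiv, if_pos hac', klDiv, if_pos hac]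
        apply ENNReal.ofReal_le_ofReal
        show klDivR (W t) J ≤ klDivR V J
        have h1 := klDivR_interp_le hV.1 hJ.1 hac ht0 ht1
        have h2 := klDivR_nonneg hV hJ hac
        calc klDivR (W t) J ≤ (1 - t) * klDivR V J := h1
          _ ≤ klDivR V J := by nlinarith
      have hmem' : klDiv (W t) J ∈
          {v : ℝ≥0∞ | ∃ V : X × Y → ℝ, IsDist V ∧ mi V = r ∧ v = klDiv V J} :=
        ⟨W t, hWdist, by rw [mi_eq_miAux hWnn]; exact hφt, rfl⟩
      exact (sInf_le hmem').trans hle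

end Async
end
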